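/- arXiv:1906.08514 — 7 statements merged into one kernel-verified Lean document; each statement's English description precedes it below -/
import Mathlib

section
/- Let V₁,…,V_k be hyperplanes (codimension-1 subspaces) in ℝⁿ with the Euclidean norm. Then there exists a vector x ∈ ℝⁿ with ‖x‖₂ = 1 such that dist(x, V_j) ≥ 1/(2kn) for all j = 1,…,k. -/
open Finset RealInnerProductSpace

private lemma count_bad (n k : ℕ) (u : EuclideanSpace ℝ (Fin n)) (i₀ : Fin n)
    (hbig : 1 / Real.sqrt n ≤ |u i₀|) (hn : 0 < n) :
    ((Finset.univ.filter (fun c : Fin n → Fin (k+1) =>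
        |∑ i, (c i : ℝ) * u i| < 1 / (2 * Real.sqrt n))).card ≤ (k+1)^(n-1)) := by
  classical
  have hinj : Set.InjOn (fun c : Fin n → Fin (k+1) => fun m : {m : Fin n // ¬ m = i₀} => c m.1)
      (Finset.univ.filter (fun c : Fin n → Fin (k+1) =>
        |∑ i, (c i : ℝ) * u i| < 1 / (2 * Real.sqrt n)) : Finset _) := by
    intro c hc c' hc' heq
    simp only [Finset.coe_filter, Set.mem_setOf_eq, Finset.mem_univ, true_and] at hc hc'
    have hoff : ∀ m : Fin n, m ≠ i₀ → c m = c' m := fun m hm => congrFun heq ⟨m, hm⟩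
    have hsn : (0:ℝ) < Real.sqrt n := Real.sqrt_pos.2 (by exact_mod_cast hn)
    by_contra hne
    have hci : c i₀ ≠ c' i₀ := by
      intro h; apply hne; funext m
      by_cases hm : m = i₀
      · subst hm; exact h
      · exact hoff m hm
    have hdiff : (∑ i, (c i : ℝ) * u i) - (∑ i, (c' i : ℝ) * u i)
        = ((c i₀ : ℝ) - (c' i₀ : ℝ)) * u i₀ := by
      rw [← Finset.sum_sub_distrib]
      rw [Finset.sum_eq_single i₀]
      · ring
      · intro b _ hb; rw [hoff b hb]; ring
      · intro h; exact absurd (Finset.mem_univ i₀) h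
    have h1 : (1:ℝ) ≤ |(c i₀ : ℝ) - (c' i₀ : ℝ)| := by
      have : ((c i₀ : ℤ)) ≠ ((c' i₀ : ℤ)) := by
        exact_mod_cast fun h => hci (Fin.val_injective (by exact_mod_cast h))
      have h2 : (1:ℤ) ≤ |(c i₀ : ℤ) - (c' i₀ : ℤ)| := Int.one_le_abs (sub_ne_zero.2 this)
      calc (1:ℝ) = ((1:ℤ):ℝ) := by norm_num
        _ ≤ ((|(c i₀ : ℤ) - (c' i₀ : ℤ)|:ℤ):ℝ) := by exact_mod_cast h2
        _ = |(c i₀ : ℝ) - (c' i₀ : ℝ)| := by push_cast; ring_nf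
    have hlow : 1 / Real.sqrt n ≤ |((c i₀ : ℝ) - (c' i₀ : ℝ)) * u i₀| := by
      rw [abs_mul]
      calc 1 / Real.sqrt n = 1 * (1 / Real.sqrt n) := by ring
        _ ≤ |(c i₀ : ℝ) - (c' i₀ : ℝ)| * |u i₀| := by
            apply mul_le_mul h1 hbig (by positivity) (le_trans zero_le_one h1)
    have hup : |((c i₀ : ℝ) - (c' i₀ : ℝ)) * u i₀| < 1 / Real.sqrt n := by
      rw [← hdiff]
      calc |(∑ i, (c i : ℝ) * u i) - (∑ i, (c' i : ℝ) * u i)|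
          ≤ |∑ i, (c i : ℝ) * u i| + |∑ i, (c' i : ℝ) * u i| := abs_sub _ _
        _ < 1 / (2 * Real.sqrt n) + 1 / (2 * Real.sqrt n) := by linarith
        _ = 1 / Real.sqrt n := by field_simp; norm_num
    linarith
  have := Finset.card_le_card_of_injOn _ (fun c _ => Finset.mem_univ _) hinj
  refine le_trans this ?_
  rw [Finset.card_univ, Fintype.card_fun]
  have : Fintype.card {m : Fin n // ¬ m = i₀} = n - 1 := by
    rw [Fintype.card_subtype_compl, Fintype.card_subtype_eq, Fintype.card_fin]
  rw [this, Fintype.card_fin]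

/-- Given hyperplanes `V₁,…,V_k` in Euclidean `ℝⁿ`, there is a unit
vector `x` with `dist(x, V_j) ≥ 1/(2kn)` for all `j`. -/
theorem stmt1 (n k : ℕ) (hk : 0 < k)
    (V : Fin k → Submodule ℝ (EuclideanSpace ℝ (Fin n)))
    (hV : ∀ j, Module.finrank ℝ (EuclideanSpace ℝ (Fin n) ⧸ V j) = 1) :
    ∃ x : EuclideanSpace ℝ (Fin n), ‖x‖ = 1 ∧
      ∀ j, 1 / (2 * (k : ℝ) * (n : ℝ)) ≤ Metric.infDist x (V j : Set (EuclideanSpace ℝ (Fin n))) := by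
  classical
  have hfr : Module.finrank ℝ (EuclideanSpace ℝ (Fin n)) = n := by
    simp [finrank_euclideanSpace]
  -- n is positive
  have hn : 0 < n := by
    have h0 := Submodule.finrank_quotient_add_finrank (V ⟨0, hk⟩)
    rw [hV ⟨0, hk⟩, hfr] at h0
    omega
  have hsn : (0:ℝ) < Real.sqrt n := Real.sqrt_pos.2 (by exact_mod_cast hn)
  have hsn2 : Real.sqrt n * Real.sqrt n = (n:ℝ) :=
    Real.mul_self_sqrt (by positivity)
  -- unit normal vectors
  have hunit : ∀ j, ∃ u : EuclideanSpace ℝ (Fin n), u ∈ (V j)ᗮ ∧ ‖u‖ = 1 := by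
    intro j
    have hne : (V j)ᗮ ≠ ⊥ := by
      intro h
      have : V j = ⊤ := Submodule.orthogonal_eq_bot_iff.1 h
      have h0 := Submodule.finrank_quotient_add_finrank (V j)
      rw [hV j, hfr, this, finrank_top, hfr] at h0
      omega
    obtain ⟨w, hw, hw0⟩ := Submodule.ne_bot_iff _ |>.1 hne
    refine ⟨‖w‖⁻¹ • w, Submodule.smul_mem _ _ hw, norm_smul_inv_norm hw0⟩
  choose u humem hunorm using hunit
  -- each u j has a large coordinate
  have hbigcoord : ∀ j, ∃ i, 1 / Real.sqrt n ≤ |u j i| := by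
    intro j
    by_contra hcon
    push_neg at hcon
    have hsum : ∑ i, ‖u j i‖^2 = 1 := by
      have hh := EuclideanSpace.norm_eq (u j)
      rw [hunorm j] at hh
      have h2 : Real.sqrt (∑ i, ‖u j i‖^2) = 1 := hh.symm
      have hnn : (0:ℝ) ≤ ∑ i, ‖u j i‖^2 := Finset.sum_nonneg (fun i _ => sq_nonneg _)
      have h3 := Real.sq_sqrt hnn
      rw [h2] at h3
      simpa using h3.symm
    have hlt : ∑ i, ‖u j i‖^2 < ∑ _i : Fin n, (1:ℝ)/n := by
      apply Finset.sum_lt_sum_of_nonempty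
      · exact Finset.univ_nonempty_iff.2 ⟨⟨0, hn⟩⟩
      · intro i _
        have h := hcon i
        have : ‖u j i‖^2 < (1 / Real.sqrt n)^2 := by
          rw [Real.norm_eq_abs]
          apply sq_lt_sq' _ h
          · calc -(1 / Real.sqrt n) < 0 := neg_lt_zero.mpr (by positivity)
              _ ≤ |u j i| := abs_nonneg _
        calc ‖u j i‖^2 < (1 / Real.sqrt n)^2 := this
          _ = 1/n := by rw [div_pow, one_pow]; rw [sq]; rw [hsn2]
    rw [Finset.sum_const, Finset.card_univ, Fintype.card_fin, nsmul_eq_mul] at hlt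
    rw [hsum] at hlt
    rw [mul_one_div, div_self (by exact_mod_cast hn.ne')] at hlt
    exact lt_irrefl _ hlt
  choose bigi hbigi using hbigcoord
  -- pigeonhole: find a good c
  set Bad : Fin k → Finset (Fin n → Fin (k+1)) := fun j =>
    Finset.univ.filter (fun c => |∑ i, (c i : ℝ) * u j i| < 1 / (2 * Real.sqrt n)) with hBad
  have hcard : ∀ j, (Bad j).card ≤ (k+1)^(n-1) := fun j =>
    count_bad n k (u j) (bigi j) (hbigi j) hn
  have hcardU : (Finset.univ.biUnion Bad).card < Fintype.card (Fin n → Fin (k+1)) := by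
    calc (Finset.univ.biUnion Bad).card ≤ ∑ j, (Bad j).card := Finset.card_biUnion_le
      _ ≤ ∑ _j : Fin k, (k+1)^(n-1) := Finset.sum_le_sum (fun j _ => hcard j)
      _ = k * (k+1)^(n-1) := by rw [Finset.sum_const, Finset.card_univ, Fintype.card_fin,
          smul_eq_mul]
      _ < (k+1) * (k+1)^(n-1) := by
          exact (Nat.mul_lt_mul_right (Nat.pow_pos (Nat.succ_pos k))).2
            (Nat.lt_succ_self k)
      _ = (k+1)^n := by rw [← pow_succ']; congr 1; omega
      _ = Fintype.card (Fin n → Fin (k+1)) := by rw [Fintype.card_fun]; simp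
  obtain ⟨c, hc⟩ : ∃ c, c ∉ Finset.univ.biUnion Bad := by
    by_contra h
    push_neg at h
    have heq : Finset.univ.biUnion Bad = Finset.univ := Finset.eq_univ_iff_forall.2 h
    rw [heq, Finset.card_univ] at hcardU
    exact lt_irrefl _ hcardU
  have hgood : ∀ j, 1 / (2 * Real.sqrt n) ≤ |∑ i, (c i : ℝ) * u j i| := by
    intro j
    by_contra h
    push_neg at h
    exact hc (Finset.mem_biUnion.2 ⟨j, Finset.mem_univ j, Finset.mem_filter.2 ⟨Finset.mem_univ c, h⟩⟩)
  -- assemble the vector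
  set y : EuclideanSpace ℝ (Fin n) := WithLp.toLp 2 (fun i => (c i : ℝ)) with hy
  have hinner : ∀ j, (inner ℝ y (u j) : ℝ) = ∑ i, (c i : ℝ) * u j i := by
    intro j
    rw [PiLp.inner_apply]
    exact Finset.sum_congr rfl (fun i _ => by simp [hy, mul_comm])
  have hy0 : y ≠ 0 := by
    intro h
    have h1 := hgood ⟨0, hk⟩
    rw [← hinner ⟨0, hk⟩, h, inner_zero_left] at h1
    simp at h1
    have hpos : (0:ℝ) < (Real.sqrt n)⁻¹ * 2⁻¹ := by positivity
    linarith
  have hynorm : ‖y‖ ≤ (k:ℝ) * Real.sqrt n := by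
    rw [EuclideanSpace.norm_eq]
    have hb : ∑ i, ‖y i‖^2 ≤ (n:ℝ) * k^2 := by
      calc ∑ i, ‖y i‖^2 ≤ ∑ _i : Fin n, (k:ℝ)^2 := by
            apply Finset.sum_le_sum
            intro i _
            rw [Real.norm_eq_abs]
            have h1 : |(c i : ℝ)| ≤ (k:ℝ) := by
              rw [abs_of_nonneg (by positivity)]
              exact_mod_cast Nat.lt_succ_iff.1 (c i).isLt
            nlinarith [abs_nonneg ((c i : ℝ))]
        _ = (n:ℝ) * k^2 := by rw [Finset.sum_const, Finset.card_univ, Fintype.card_fin,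
            nsmul_eq_mul]
    calc Real.sqrt (∑ i, ‖y i‖^2) ≤ Real.sqrt ((n:ℝ) * k^2) := Real.sqrt_le_sqrt hb
      _ = (k:ℝ) * Real.sqrt n := by
          rw [show (n:ℝ) * k^2 = ((k:ℝ))^2 * n by ring, Real.sqrt_mul (by positivity),
            Real.sqrt_sq (by positivity)]
  have hynpos : (0:ℝ) < ‖y‖ := norm_pos_iff.2 hy0
  refine ⟨‖y‖⁻¹ • y, norm_smul_inv_norm hy0, ?_⟩
  intro j
  -- lower bound on the inner product of the normalized vector
  have hkpos : (0:ℝ) < k := by exact_mod_cast hk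
  have hxinner : 1 / (2 * (k:ℝ) * n) ≤ |(inner ℝ (‖y‖⁻¹ • y) (u j) : ℝ)| := by
    rw [real_inner_smul_left, abs_mul, abs_of_nonneg (by positivity), hinner j]
    have h1 : 1 / (2 * Real.sqrt n) ≤ |∑ i, (c i : ℝ) * u j i| := hgood j
    have h2 : ((k:ℝ) * Real.sqrt n)⁻¹ ≤ ‖y‖⁻¹ :=
      inv_anti₀ hynpos hynorm
    calc 1 / (2 * (k:ℝ) * n) = ((k:ℝ) * Real.sqrt n)⁻¹ * (1 / (2 * Real.sqrt n)) := by
          field_simp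
          nlinarith [hsn2]
      _ ≤ ‖y‖⁻¹ * |∑ i, (c i : ℝ) * u j i| := by
          apply mul_le_mul h2 h1 (by positivity) (by positivity)
  -- pass to infDist
  have hVne : ((V j : Set (EuclideanSpace ℝ (Fin n)))).Nonempty := ⟨0, Submodule.zero_mem _⟩
  by_contra hcon
  push_neg at hcon
  obtain ⟨v, hv, hvlt⟩ := (Metric.infDist_lt_iff hVne).1 hcon
  have horth : (inner ℝ v (u j) : ℝ) = 0 := (Submodule.mem_orthogonal _ _).1 (humem j) v hv
  have : |(inner ℝ (‖y‖⁻¹ • y) (u j) : ℝ)| ≤ dist (‖y‖⁻¹ • y) v := by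
    rw [dist_eq_norm]
    calc |(inner ℝ (‖y‖⁻¹ • y) (u j) : ℝ)| = |(inner ℝ (‖y‖⁻¹ • y - v) (u j) : ℝ)| := by
          rw [inner_sub_left, horth, sub_zero]
      _ ≤ ‖‖y‖⁻¹ • y - v‖ * ‖u j‖ := abs_real_inner_le_norm _ _
      _ = ‖‖y‖⁻¹ • y - v‖ := by rw [hunorm j, mul_one]
  linarith
end

section
/- Let H be a real Hilbert space and let (φ_j)_{j∈ℕ} be a sequence of bounded linear functionals on H, each of norm 1. Then there exist a sequence of positive reals (δ_j)_{j∈ℕ} with lim_{j→∞} (1/j)·log δ_j = 0 and a unit vector x ∈ H such that |φ_j(x)| ≥ δ_j for all j. -/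
open Filter MeasureTheory Set

namespace Stmt4Aux

noncomputable def nu : Measure ℝ := (2⁻¹ : ENNReal) • (volume.restrict (Icc (-1:ℝ) 1))

instance : IsProbabilityMeasure nu := by
  constructor
  simp [nu, Measure.restrict_apply, Real.volume_Icc]
  rw [show (1:ℝ) + 1 = 2 by norm_num, ENNReal.ofReal_ofNat]
  simp [ENNReal.inv_mul_cancel]

/-- 1-D anticoncentration. -/
lemma nu_anti (b c δ : ℝ) (hc : c ≠ 0) :
    nu {t | |b + c * t| < δ} ≤ ENNReal.ofReal (δ / |c|) := by
  have hsub : {t | |b + c * t| < δ} ⊆ Metric.ball (-b/c) (δ/|c|) := by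
    intro t ht
    simp only [mem_setOf_eq] at ht
    simp only [Metric.mem_ball, Real.dist_eq]
    have h1 : t - (-b/c) = (b + c*t)/c := by field_simp; ring
    rw [h1, abs_div]
    exact (div_lt_div_iff_of_pos_right (abs_pos.2 hc)).2 ht
  calc nu {t | |b + c * t| < δ} ≤ nu (Metric.ball (-b/c) (δ/|c|)) := measure_mono hsub
    _ ≤ 2⁻¹ * volume (Metric.ball (-b/c) (δ/|c|)) := by
        simp only [nu, Measure.smul_apply, smul_eq_mul]
        gcongr
        exact Measure.restrict_le_self
    _ ≤ ENNReal.ofReal (δ / |c|) := by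
        rw [Real.volume_ball]
        rw [ENNReal.ofReal_mul (by norm_num : (0:ℝ) ≤ 2)]
        rw [ENNReal.ofReal_ofNat, ← mul_assoc, ENNReal.inv_mul_cancel (by norm_num) (by norm_num), one_mul]

end Stmt4Aux

namespace Stmt4Aux
open Stmt4Aux

/-- product anticoncentration -/
lemma pi_anti {n : ℕ} (W : Fin (n+1) → ℝ) (i₀ : Fin (n+1)) (m δ : ℝ) (hm : 0 < m)
    (hW : m ≤ |W i₀|) :
    (Measure.pi fun _ : Fin (n+1) => nu) {ω | |∑ i, W i * ω i| < δ} ≤ ENNReal.ofReal (δ / m) := by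
  rcases le_or_gt δ 0 with hδ | hδ
  · have : {ω : Fin (n+1) → ℝ | |∑ i, W i * ω i| < δ} = ∅ := by
      ext ω; simp only [mem_setOf_eq, mem_empty_iff_false, iff_false, not_lt]
      exact hδ.trans (abs_nonneg _)
    simp [this]
  have hc0 : W i₀ ≠ 0 := by
    intro h; rw [h] at hW; simp at hW; linarith
  set e := MeasurableEquiv.piFinSuccAbove (fun _ : Fin (n+1) => ℝ) i₀ with he
  set s : Set (ℝ × (Fin n → ℝ)) :=
    {p | |W i₀ * p.1 + ∑ j, W (i₀.succAbove j) * p.2 j| < δ} with hs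
  have hmeas : MeasurableSet s := by
    have : Measurable fun p : ℝ × (Fin n → ℝ) =>
        |W i₀ * p.1 + ∑ j, W (i₀.succAbove j) * p.2 j| := by
      apply Measurable.abs
      apply Measurable.add
      · exact measurable_fst.const_mul _
      · exact Finset.measurable_sum _ fun j _ =>
          (measurable_snd.eval (a := j)).const_mul _
    exact this (measurableSet_Iio (a := δ))
  have hpre : {ω : Fin (n+1) → ℝ | |∑ i, W i * ω i| < δ} = e ⁻¹' s := by
    ext ω
    simp only [mem_setOf_eq, mem_preimage, hs, he, MeasurableEquiv.piFinSuccAbove]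
    rw [Fin.sum_univ_succAbove (fun i => W i * ω i) i₀]
    exact Iff.rfl
  rw [hpre]
  have hmp := measurePreserving_piFinSuccAbove (fun _ : Fin (n+1) => nu) i₀
  rw [hmp.measure_preimage hmeas.nullMeasurableSet]
  rw [Measure.prod_apply_symm hmeas]
  have hbd : ∀ y : Fin n → ℝ, nu ((fun x => (x, y)) ⁻¹' s) ≤ ENNReal.ofReal (δ / m) := by
    intro y
    have h1 : ((fun x => (x, y)) ⁻¹' s)
        = {t | |(∑ j, W (i₀.succAbove j) * y j) + W i₀ * t| < δ} := by
      ext t; simp [hs, add_comm]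
    rw [h1]
    refine (nu_anti _ _ _ hc0).trans ?_
    apply ENNReal.ofReal_le_ofReal
    apply div_le_div_of_nonneg_left hδ.le hm hW
  calc ∫⁻ y, nu ((fun x => (x, y)) ⁻¹' s) ∂(Measure.pi fun _ : Fin n => nu)
      ≤ ∫⁻ _, ENNReal.ofReal (δ / m) ∂(Measure.pi fun _ : Fin n => nu) := lintegral_mono hbd
    _ = ENNReal.ofReal (δ / m) := by simp

end Stmt4Aux

namespace Stmt4Aux

lemma sum_range_inv_sq (n : ℕ) :
    ∑ k ∈ Finset.range n, (1/((k:ℝ)+1))^2 ≤ 2 - 2/((n:ℝ)+1) := by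
  induction n with
  | zero => simp
  | succ n ih =>
    rw [Finset.sum_range_succ]
    have h1 : (0:ℝ) < (n:ℝ)+1 := by positivity
    have h2 : (0:ℝ) < (n:ℝ)+2 := by positivity
    have key : (1/((n:ℝ)+1))^2 ≤ 2/((n:ℝ)+1) - 2/((n:ℝ)+2) := by
      rw [div_sub_div _ _ (ne_of_gt h1) (ne_of_gt h2), div_pow, one_pow, div_le_div_iff₀ (by positivity) (by positivity)]
      ring_nf
      nlinarith [sq_nonneg ((n:ℝ)+1)]
    push_cast
    have hcast : (2:ℝ)/((n:ℝ)+1+1) = 2/((n:ℝ)+2) := by ring_nf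
    linarith

lemma sum_finset_inv_sq (F : Finset ℕ) : ∑ k ∈ F, (1/((k:ℝ)+1))^2 ≤ 2 := by
  classical
  obtain ⟨n, hn⟩ : ∃ n, F ⊆ Finset.range n := ⟨(F.sup id) + 1, fun k hk =>
    Finset.mem_range.2 (Nat.lt_succ_of_le (Finset.le_sup (f := id) hk))⟩
  calc ∑ k ∈ F, (1/((k:ℝ)+1))^2 ≤ ∑ k ∈ Finset.range n, (1/((k:ℝ)+1))^2 :=
        Finset.sum_le_sum_of_subset_of_nonneg hn (fun k _ _ => by positivity)
    _ ≤ 2 - 2/((n:ℝ)+1) := sum_range_inv_sq n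
    _ ≤ 2 := by
        have : (0:ℝ) < (n:ℝ)+1 := by positivity
        have : (0:ℝ) ≤ 2/((n:ℝ)+1) := by positivity
        linarith

/-- Finite existence step -/
lemma exists_good (N : ℕ) (W : ℕ → ℕ → ℝ) (κ m : ℕ → ℝ)
    (hκ : ∀ j, 0 < κ j) (hm : ∀ j, 0 < m j)
    (hsel : ∀ j ≤ N, ∃ k ≤ N, m j ≤ |W j k|)
    (hsum : ∑ j ∈ Finset.Iic N, κ j / m j ≤ 1/2) :
    ∃ u : ℕ → ℝ, (∀ k, u k ∈ Icc (-1:ℝ) 1) ∧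
      ∀ j ≤ N, κ j ≤ |∑ k ∈ Finset.range (N+1), W j k * u k| := by
  classical
  set μ := (Measure.pi fun _ : Fin (N+1) => nu) with hμ
  set T : ℕ → (Fin (N+1) → ℝ) → ℝ := fun j ω => ∑ i, W j i.val * ω i with hT
  set Bad : ℕ → Set (Fin (N+1) → ℝ) := fun j => {ω | |T j ω| < κ j} with hBad
  have hBadMeas : ∀ j, MeasurableSet (Bad j) := by
    intro j
    have : Measurable fun ω : Fin (N+1) → ℝ => |T j ω| :=
      (Finset.measurable_sum _ fun i _ => (measurable_pi_apply i).const_mul _).abs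
    exact this (measurableSet_Iio (a := κ j))
  have hBadBound : ∀ j ≤ N, μ (Bad j) ≤ ENNReal.ofReal (κ j / m j) := by
    intro j hj
    obtain ⟨k, hk, hWk⟩ := hsel j hj
    have hk' : k < N + 1 := Nat.lt_succ_of_le hk
    have := pi_anti (fun i : Fin (N+1) => W j i.val) ⟨k, hk'⟩ (m j) (κ j) (hm j) hWk
    exact this
  set A : Set (Fin (N+1) → ℝ) := {ω | ∀ i, ω i ∈ Icc (-1:ℝ) 1} with hA
  have hAc : μ Aᶜ = 0 := by
    have : Aᶜ ⊆ ⋃ i, (Function.eval i) ⁻¹' (Icc (-1:ℝ) 1)ᶜ := by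
      intro ω hω
      simp only [hA, mem_compl_iff, mem_setOf_eq, not_forall] at hω
      obtain ⟨i, hi⟩ := hω
      exact mem_iUnion.2 ⟨i, hi⟩
    refine measure_mono_null this (measure_iUnion_null fun i => ?_)
    apply Measure.pi_eval_preimage_null
    have : nu (Icc (-1:ℝ) 1)ᶜ = 2⁻¹ * (volume.restrict (Icc (-1:ℝ) 1)) (Icc (-1:ℝ) 1)ᶜ := rfl
    rw [this, Measure.restrict_apply (measurableSet_Icc.compl)]
    simp
  have hUnion : μ (⋃ j ∈ Finset.Iic N, Bad j) ≤ ENNReal.ofReal (1/2) := by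
    calc μ (⋃ j ∈ Finset.Iic N, Bad j) ≤ ∑ j ∈ Finset.Iic N, μ (Bad j) :=
          measure_biUnion_finset_le _ _
      _ ≤ ∑ j ∈ Finset.Iic N, ENNReal.ofReal (κ j / m j) :=
          Finset.sum_le_sum fun j hj => hBadBound j (Finset.mem_Iic.1 hj)
      _ = ENNReal.ofReal (∑ j ∈ Finset.Iic N, κ j / m j) :=
          (ENNReal.ofReal_sum_of_nonneg fun j _ => le_of_lt (div_pos (hκ j) (hm j))).symm
      _ ≤ ENNReal.ofReal (1/2) := ENNReal.ofReal_le_ofReal hsum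
  have hlt : μ (Aᶜ ∪ ⋃ j ∈ Finset.Iic N, Bad j) < 1 := by
    calc μ (Aᶜ ∪ ⋃ j ∈ Finset.Iic N, Bad j) ≤ μ Aᶜ + μ (⋃ j ∈ Finset.Iic N, Bad j) :=
          measure_union_le _ _
      _ ≤ 0 + ENNReal.ofReal (1/2) := by gcongr <;> simp [hAc, hUnion]
      _ < 1 := by
          rw [zero_add]
          calc ENNReal.ofReal (1/2) < ENNReal.ofReal 1 := by
                rw [ENNReal.ofReal_lt_ofReal_iff] <;> norm_num
            _ = 1 := ENNReal.ofReal_one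
  have hμuniv : μ univ = 1 := measure_univ
  have : (Aᶜ ∪ ⋃ j ∈ Finset.Iic N, Bad j) ≠ univ := by
    intro h; rw [h, hμuniv] at hlt; exact lt_irrefl _ hlt
  obtain ⟨ω, hω⟩ : ∃ ω, ω ∉ (Aᶜ ∪ ⋃ j ∈ Finset.Iic N, Bad j) := by
    by_contra h
    push_neg at h
    exact this (eq_univ_of_forall h)
  have hωA : ω ∈ A := by by_contra h; exact hω (mem_union_left _ h)
  have hωB : ∀ j, j ≤ N → ω ∉ Bad j := fun j hj hbad =>
    hω (mem_union_right _ (mem_iUnion₂.2 ⟨j, Finset.mem_Iic.2 hj, hbad⟩))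
  refine ⟨fun k => if h : k < N+1 then ω ⟨k, h⟩ else 0, ?_, ?_⟩
  · intro k
    by_cases h : k < N+1
    · simp only [dif_pos h]; exact hωA ⟨k, h⟩
    · simp only [dif_neg h]; constructor <;> norm_num
  · intro j hj
    have hnotbad : ω ∉ Bad j := hωB j hj
    simp only [hBad, mem_setOf_eq, not_lt] at hnotbad
    have heq : T j ω = ∑ k ∈ Finset.range (N+1), W j k * (if h : k < N+1 then ω ⟨k, h⟩ else 0) := by
      rw [hT]
      rw [← Fin.sum_univ_eq_sum_range (fun k => W j k * (if h : k < N+1 then ω ⟨k, h⟩ else 0)) (N+1)]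
      apply Finset.sum_congr rfl
      intro i _
      simp [i.isLt]
    rw [← heq]
    exact hnotbad

end Stmt4Aux

namespace Stmt4Aux

variable {H : Type*} [NormedAddCommGroup H] [InnerProductSpace ℝ H]

lemma norm_sum_sq_orth (f : ℕ → H) (horth : ∀ i j, i ≠ j → (inner ℝ (f i) (f j) : ℝ) = 0)
    (F : Finset ℕ) : ‖∑ k ∈ F, f k‖^2 = ∑ k ∈ F, ‖f k‖^2 := by
  rw [← real_inner_self_eq_norm_sq]
  rw [sum_inner]
  rw [Finset.sum_congr rfl (fun i hi => inner_sum F f (f i))]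
  rw [Finset.sum_congr rfl (fun i hi => Finset.sum_eq_single i
    (fun j _ hji => horth i j (Ne.symm hji)) (fun hi' => absurd hi hi'))]
  exact Finset.sum_congr rfl fun i _ => real_inner_self_eq_norm_sq _

lemma summable_orth [CompleteSpace H] (f : ℕ → H)
    (horth : ∀ i j, i ≠ j → (inner ℝ (f i) (f j) : ℝ) = 0)
    (hb : ∀ k, ‖f k‖ ≤ 1/((k:ℝ)+1)) : Summable f := by
  rw [summable_iff_vanishing]
  intro e he
  obtain ⟨ε, hε, hball⟩ := Metric.mem_nhds_iff.1 he
  have hg : Summable fun k : ℕ => (1/((k:ℝ)+1))^2 := by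
    have := Real.summable_one_div_nat_pow.2 (show 1 < 2 by norm_num)
    have h2 := (summable_nat_add_iff 1).2 this
    apply h2.congr
    intro k
    push_cast
    rw [one_div, one_div, inv_pow]
  obtain ⟨s, hs⟩ := summable_iff_vanishing.1 hg (Metric.ball 0 (ε^2))
    (Metric.ball_mem_nhds 0 (by positivity))
  refine ⟨s, fun t ht => ?_⟩
  apply hball
  simp only [Metric.mem_ball, dist_zero_right]
  have h1 : ‖∑ k ∈ t, f k‖^2 = ∑ k ∈ t, ‖f k‖^2 := norm_sum_sq_orth f horth t
  have h2 : ∑ k ∈ t, ‖f k‖^2 ≤ ∑ k ∈ t, (1/((k:ℝ)+1))^2 :=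
    Finset.sum_le_sum fun k _ => pow_le_pow_left₀ (norm_nonneg _) (hb k) 2
  have h3 := hs t ht
  simp only [Metric.mem_ball, dist_zero_right, Real.norm_eq_abs] at h3
  have h4 : ∑ k ∈ t, (1/((k:ℝ)+1))^2 < ε^2 := lt_of_abs_lt h3
  nlinarith [norm_nonneg (∑ k ∈ t, f k)]

end Stmt4Aux

open Filter Stmt4Aux InnerProductSpace

set_option maxHeartbeats 2000000 in
/-- For a sequence of norm-one bounded linear functionals `(φ_j)` on a
real Hilbert space, there are positive reals `δ_j` with `(1/j)·log δ_j → 0` and a unit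
vector `x` with `|φ_j x| ≥ δ_j` for all `j` (here `j : ℕ` stands for the `(j+1)`-st
functional of the paper). -/
theorem stmt4 {H : Type*} [NormedAddCommGroup H] [InnerProductSpace ℝ H] [CompleteSpace H]
    (φ : ℕ → (H →L[ℝ] ℝ)) (hφ : ∀ j, ‖φ j‖ = 1) :
    ∃ δ : ℕ → ℝ, (∀ j, 0 < δ j) ∧
      Tendsto (fun j : ℕ => (1 / ((j : ℝ) + 1)) * Real.log (δ j)) atTop (nhds 0) ∧
      ∃ x : H, ‖x‖ = 1 ∧ ∀ j, δ j ≤ |φ j x| := by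
  classical
  set v : ℕ → H := fun j => (InnerProductSpace.toDual ℝ H).symm (φ j) with hv
  have hvφ : ∀ j (y : H), (inner ℝ (v j) y : ℝ) = φ j y := fun j y =>
    InnerProductSpace.toDual_symm_apply
  have hvnorm : ∀ j, ‖v j‖ = 1 := fun j => by
    rw [hv]; rw [LinearIsometryEquiv.norm_map]; exact hφ j
  set g : ℕ → H := fun k => gramSchmidt ℝ v k with hg
  set e : ℕ → H := fun k => gramSchmidtNormed ℝ v k with he
  have he_def : ∀ k, e k = (‖g k‖ : ℝ)⁻¹ • g k := fun k => rfl
  have he_orth : ∀ i j, i ≠ j → (inner ℝ (e i) (e j) : ℝ) = 0 := by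
    intro i j hij
    rw [he_def, he_def, real_inner_smul_left, real_inner_smul_right,
      gramSchmidt_orthogonal ℝ v hij]
    ring
  have he_norm01 : ∀ k, ‖e k‖ = 0 ∨ ‖e k‖ = 1 := by
    intro k
    by_cases h : g k = 0
    · left; rw [he_def, h, smul_zero, norm_zero]
    · right
      rw [he_def, norm_smul, norm_inv, norm_norm, inv_mul_cancel₀ (norm_ne_zero_iff.2 h)]
  have he_le1 : ∀ k, ‖e k‖ ≤ 1 := fun k => by rcases he_norm01 k with h | h <;> rw [h] <;> norm_num
  have hge : ∀ k, g k = ‖g k‖ • e k := by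
    intro k
    by_cases h : g k = 0
    · rw [h, he_def, h, smul_zero, smul_zero]
    · rw [he_def, smul_smul, mul_inv_cancel₀ (norm_ne_zero_iff.2 h), one_smul]
  have hspan : ∀ j, v j ∈ Submodule.span ℝ (e '' Set.Iic j) := by
    intro j
    have h1 := mem_span_gramSchmidt ℝ v (le_refl j)
    have h2 : Submodule.span ℝ (gramSchmidt ℝ v '' Set.Iic j) ≤
        Submodule.span ℝ (e '' Set.Iic j) := by
      rw [Submodule.span_le]
      rintro - ⟨k, hk, rfl⟩
      have : gramSchmidt ℝ v k = ‖g k‖ • e k := hge k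
      rw [this]
      exact Submodule.smul_mem _ _ (Submodule.subset_span ⟨k, hk, rfl⟩)
    exact h2 h1
  set c : ℕ → ℕ → ℝ := fun j k => (inner ℝ (v j) (e k) : ℝ) with hc
  have hczero : ∀ j k, j < k → c j k = 0 := by
    intro j k hjk
    have : (inner ℝ (v j) (e k) : ℝ) = 0 := by
      rw [real_inner_comm]
      refine Submodule.span_induction (p := fun x _ => (inner ℝ (e k) x : ℝ) = 0)
        ?_ ?_ ?_ ?_ (hspan j)
      · rintro - ⟨m, hm, rfl⟩
        have hm' : m ≤ j := hm
        exact he_orth k m (Nat.lt_of_le_of_lt hm' hjk).ne'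
      · exact inner_zero_right _
      · intro a b _ _ ha hb; rw [inner_add_right, ha, hb, add_zero]
      · intro r a _ ha; rw [real_inner_smul_right, ha, mul_zero]
    exact this
  have hkey : ∀ j, (1:ℝ) ≤ ∑ k ∈ Finset.Iic j, (c j k)^2 := by
    intro j
    obtain ⟨l, hl, hrep⟩ := (Finsupp.mem_span_image_iff_linearCombination ℝ).1 (hspan j)
    have hsupp : (l.support : Set ℕ) ⊆ Set.Iic j := Finsupp.mem_supported ℝ l |>.1 hl
    have hrep' : v j = ∑ k ∈ l.support, l k • e k := by
      rw [← hrep, Finsupp.linearCombination_apply, Finsupp.sum]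
    have hcl : ∀ k, c j k = l k * (inner ℝ (e k) (e k) : ℝ) := by
      intro k
      rw [hc]
      simp only
      rw [hrep', sum_inner]
      rw [Finset.sum_congr rfl (fun m _ => real_inner_smul_left (e m) (e k) (l m))]
      apply Finset.sum_eq_single k
      · intro m _ hmk
        rw [he_orth m k hmk, mul_zero]
      · intro hk
        rw [Finsupp.notMem_support_iff.1 hk, zero_mul]
    have hone : (1:ℝ) = ∑ k ∈ l.support, l k * c j k := by
      have h1 : (1:ℝ) = (inner ℝ (v j) (v j) : ℝ) := by
        rw [real_inner_self_eq_norm_sq, hvnorm j, one_pow]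
      have h2 := congrArg (fun y => (inner ℝ (v j) y : ℝ)) hrep'
      rw [h1, h2, inner_sum]
      exact Finset.sum_congr rfl fun k _ => real_inner_smul_right (v j) (e k) (l k)
    have hsq : ∀ k, (c j k)^2 = l k * c j k := by
      intro k
      rcases he_norm01 k with h | h
      · have hek : e k = 0 := norm_eq_zero.1 h
        have : c j k = 0 := by rw [hc]; simp [hek]
        rw [this]; ring
      · have : (inner ℝ (e k) (e k) : ℝ) = 1 := by
          rw [real_inner_self_eq_norm_sq, h, one_pow]
        have hck : c j k = l k := by rw [hcl k, this, mul_one]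
        rw [hck]; ring
    calc (1:ℝ) = ∑ k ∈ l.support, l k * c j k := hone
      _ = ∑ k ∈ l.support, (c j k)^2 := Finset.sum_congr rfl fun k _ => (hsq k).symm
      _ ≤ ∑ k ∈ Finset.Iic j, (c j k)^2 := by
          apply Finset.sum_le_sum_of_subset_of_nonneg
          · intro k hk
            exact Finset.mem_Iic.2 (hsupp hk)
          · intro k _ _; positivity
  set w : ℕ → ℕ → ℝ := fun j k => (1/((k:ℝ)+1)) * c j k with hw
  set mm : ℕ → ℝ := fun j => 1/((j:ℝ)+1)^2 with hmm
  set κ : ℕ → ℝ := fun j => 1/(8*((j:ℝ)+1)^5) with hκ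
  have hmmpos : ∀ j, 0 < mm j := fun j => by rw [hmm]; positivity
  have hκpos : ∀ j, 0 < κ j := fun j => by rw [hκ]; positivity
  have hwzero : ∀ j k, j < k → w j k = 0 := by
    intro j k hjk; rw [hw]; simp only [hczero j k hjk, mul_zero]
  have hsel : ∀ j, ∃ k ≤ j, mm j ≤ |w j k| := by
    intro j
    have hex : ∃ k ∈ Finset.Iic j, 1/((j:ℝ)+1) ≤ (c j k)^2 := by
      by_contra hcon
      push_neg at hcon
      have hlt : ∑ k ∈ Finset.Iic j, (c j k)^2 < ∑ k ∈ Finset.Iic j, 1/((j:ℝ)+1) :=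
        Finset.sum_lt_sum_of_nonempty ⟨0, Finset.mem_Iic.2 (Nat.zero_le j)⟩ hcon
      rw [Finset.sum_const, Nat.card_Iic, nsmul_eq_mul] at hlt
      push_cast at hlt
      have hcast : ((j:ℝ)+1) * (1/((j:ℝ)+1)) = 1 := by field_simp
      rw [hcast] at hlt
      exact absurd (hkey j) (not_le.2 hlt)
    obtain ⟨k, hk, hck⟩ := hex
    have hkj : k ≤ j := Finset.mem_Iic.1 hk
    refine ⟨k, hkj, ?_⟩
    have hj1 : (0:ℝ) < (j:ℝ)+1 := by positivity
    have hk1 : (0:ℝ) < (k:ℝ)+1 := by positivity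
    have hcabs : 1/((j:ℝ)+1) ≤ |c j k| := by
      set s : ℝ := 1/((j:ℝ)+1) with hsdef
      have hs0 : 0 < s := by positivity
      have hs1 : s ≤ 1 := by rw [hsdef, div_le_one hj1]; linarith
      by_contra hcon
      push_neg at hcon
      have h2 : c j k ^ 2 < s^2 := by nlinarith [abs_nonneg (c j k), sq_abs (c j k)]
      nlinarith
    have hkle : (k:ℝ)+1 ≤ (j:ℝ)+1 := by
      have : (k:ℝ) ≤ (j:ℝ) := Nat.cast_le.2 hkj
      linarith
    have h1 : 1/((j:ℝ)+1) ≤ 1/((k:ℝ)+1) := by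
      apply div_le_div_of_nonneg_left (by norm_num) hk1 hkle
    calc mm j = (1/((j:ℝ)+1)) * (1/((j:ℝ)+1)) := by rw [hmm]; field_simp
      _ ≤ (1/((k:ℝ)+1)) * |c j k| := by
          apply mul_le_mul h1 hcabs (by positivity) (by positivity)
      _ = |w j k| := by
          rw [hw]
          simp only
          rw [abs_mul, abs_of_pos (by positivity : (0:ℝ) < 1/((k:ℝ)+1))]
  have hsum : ∀ N, ∑ j ∈ Finset.Iic N, κ j / mm j ≤ 1/2 := by
    intro N
    have hterm : ∀ j, κ j / mm j ≤ (1/4) * (1/((j:ℝ)+1))^2 := by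
      intro j
      set t : ℝ := (j:ℝ)+1 with ht
      have ht1 : (1:ℝ) ≤ t := by rw [ht]; simp
      have ht0 : (0:ℝ) < t := by linarith
      have heq : κ j / mm j = 1/(8*t^3) := by
        rw [hκ, hmm]
        field_simp
        ring
      rw [heq, div_le_iff₀ (by positivity : (0:ℝ) < 8*t^3)]
      calc (1:ℝ) ≤ 2*t := by linarith
        _ = 1/4 * (1/t)^2 * (8*t^3) := by field_simp; ring
    calc ∑ j ∈ Finset.Iic N, κ j / mm j ≤ ∑ j ∈ Finset.Iic N, (1/4) * (1/((j:ℝ)+1))^2 :=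
          Finset.sum_le_sum fun j _ => hterm j
      _ = (1/4) * ∑ j ∈ Finset.Iic N, (1/((j:ℝ)+1))^2 := by rw [Finset.mul_sum]
      _ ≤ (1/4) * 2 := by
          have := sum_finset_inv_sq (Finset.Iic N)
          linarith
      _ = 1/2 := by norm_num
  set S : ℕ → (ℕ → ℝ) → ℝ := fun j u => ∑ k ∈ Finset.Iic j, w j k * u k with hS
  have hCne : ∀ N : ℕ, ∃ u : ℕ → ℝ, (∀ k, u k ∈ Icc (-1:ℝ) 1) ∧ ∀ j ≤ N, κ j ≤ |S j u| := by
    intro N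
    obtain ⟨u, hu1, hu2⟩ := exists_good N w κ mm hκpos hmmpos
      (fun j hj => by obtain ⟨k, hk, hwk⟩ := hsel j; exact ⟨k, hk.trans hj, hwk⟩)
      (hsum N)
    refine ⟨u, hu1, fun j hj => ?_⟩
    have heq : ∑ k ∈ Finset.range (N+1), w j k * u k = S j u := by
      rw [hS]
      refine (Finset.sum_subset ?_ ?_).symm
      · intro k hk
        exact Finset.mem_range.2 (Nat.lt_succ_of_le ((Finset.mem_Iic.1 hk).trans hj))
      · intro k _ hk
        rw [hwzero j k (not_le.1 (fun h => hk (Finset.mem_Iic.2 h))), zero_mul]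
    rw [← heq]
    exact hu2 j hj
  set K : Set (ℕ → ℝ) := {u | ∀ k, u k ∈ Icc (-1:ℝ) 1} with hK
  have hKpi : K = Set.pi univ (fun _ : ℕ => Icc (-1:ℝ) 1) := by
    ext u; simp only [hK, Set.mem_setOf_eq, Set.mem_univ_pi]
  have hKcomp : IsCompact K := by
    rw [hKpi]; exact isCompact_univ_pi fun _ => isCompact_Icc
  have hScont : ∀ j, Continuous (S j) := by
    intro j
    rw [hS]
    exact continuous_finset_sum _ fun k _ => (continuous_const.mul (continuous_apply k) : Continuous fun u : ℕ → ℝ => w j k * u k)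
  set C : ℕ → Set (ℕ → ℝ) := fun N => K ∩ ⋂ (j : ℕ), ⋂ (_ : j ≤ N), {u | κ j ≤ |S j u|} with hC
  have hCmem : ∀ N u, u ∈ C N ↔ (∀ k, u k ∈ Icc (-1:ℝ) 1) ∧ ∀ j ≤ N, κ j ≤ |S j u| := by
    intro N u
    simp only [hC, hK, Set.mem_inter_iff, Set.mem_iInter, Set.mem_setOf_eq]
  have hCne' : ∀ N, (C N).Nonempty := by
    intro N; obtain ⟨u, h1, h2⟩ := hCne N; exact ⟨u, (hCmem N u).2 ⟨h1, h2⟩⟩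
  have hCclosed : ∀ N, IsClosed (C N) := by
    intro N
    apply IsClosed.inter
    · rw [hKpi]
      exact isClosed_set_pi fun _ _ => isClosed_Icc
    · apply isClosed_iInter; intro j; apply isClosed_iInter; intro _
      have hpre : {u : ℕ → ℝ | κ j ≤ |S j u|} = (fun u => |S j u|) ⁻¹' (Ici (κ j)) := rfl
      rw [hpre]
      exact IsClosed.preimage ((hScont j).abs) isClosed_Ici
  have hCdec : ∀ N, C (N+1) ⊆ C N := by
    intro N u hu
    rw [hCmem] at hu ⊢
    exact ⟨hu.1, fun j hj => hu.2 j (hj.trans (Nat.le_succ N))⟩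
  have hC0comp : IsCompact (C 0) :=
    hKcomp.of_isClosed_subset (hCclosed 0) inter_subset_left
  obtain ⟨u, hu⟩ := IsCompact.nonempty_iInter_of_sequence_nonempty_isCompact_isClosed
    C hCdec hCne' hC0comp hCclosed
  have huK : ∀ k, u k ∈ Icc (-1:ℝ) 1 := ((hCmem 0 u).1 (mem_iInter.1 hu 0)).1
  have huS : ∀ j, κ j ≤ |S j u| := fun j => ((hCmem j u).1 (mem_iInter.1 hu j)).2 j le_rfl
  set f : ℕ → H := fun k => ((1/((k:ℝ)+1)) * u k) • e k with hf
  have horthf : ∀ i j, i ≠ j → (inner ℝ (f i) (f j) : ℝ) = 0 := by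
    intro i j hij
    rw [hf]; simp only
    rw [real_inner_smul_left, real_inner_smul_right, he_orth i j hij]
    ring
  have hfb : ∀ k, ‖f k‖ ≤ 1/((k:ℝ)+1) := by
    intro k
    rw [hf]; simp only [norm_smul]
    have h1 : |u k| ≤ 1 := abs_le.2 ⟨(huK k).1, (huK k).2⟩
    have h2 : (0:ℝ) < 1/((k:ℝ)+1) := by positivity
    calc ‖(1/((k:ℝ)+1) * u k : ℝ)‖ * ‖e k‖ ≤ ‖(1/((k:ℝ)+1) * u k : ℝ)‖ * 1 :=
          mul_le_mul_of_nonneg_left (he_le1 k) (norm_nonneg _)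
      _ = (1/((k:ℝ)+1)) * |u k| := by
          rw [mul_one, Real.norm_eq_abs, abs_mul, abs_of_pos h2]
      _ ≤ (1/((k:ℝ)+1)) * 1 := mul_le_mul_of_nonneg_left h1 h2.le
      _ = 1/((k:ℝ)+1) := mul_one _
  have hsummf : Summable f := summable_orth f horthf hfb
  obtain ⟨x, hx⟩ := hsummf
  have hinner : ∀ j, (inner ℝ (v j) x : ℝ) = S j u := by
    intro j
    have h1 : HasSum (fun k => (inner ℝ (v j) (f k) : ℝ)) (inner ℝ (v j) x) :=
      (innerSL ℝ (v j)).hasSum hx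
    have hterm : ∀ k, (inner ℝ (v j) (f k) : ℝ) = w j k * u k := by
      intro k
      rw [hf]; simp only
      rw [real_inner_smul_right]
      simp only [hw, hc]
      ring
    have h1' : HasSum (fun k => w j k * u k) ((inner ℝ (v j) x : ℝ)) := by
      simpa only [hterm] using h1
    have h2 : HasSum (fun k => w j k * u k) (S j u) := by
      rw [hS]; simp only
      apply hasSum_sum_of_ne_finset_zero
      intro k hk
      rw [hwzero j k (not_le.1 fun h => hk (Finset.mem_Iic.2 h)), zero_mul]
    exact h1'.unique h2
  have hnsq : ‖x‖^2 ≤ 2 := by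
    have hcont : Continuous fun y : H => ‖y‖^2 := continuous_norm.pow 2
    have ht : Tendsto (fun F : Finset ℕ => ‖∑ k ∈ F, f k‖^2) atTop (nhds (‖x‖^2)) :=
      (hcont.tendsto x).comp hx
    refine le_of_tendsto ht (Eventually.of_forall fun F => ?_)
    rw [norm_sum_sq_orth f horthf F]
    calc ∑ k ∈ F, ‖f k‖^2 ≤ ∑ k ∈ F, (1/((k:ℝ)+1))^2 :=
          Finset.sum_le_sum fun k _ => pow_le_pow_left₀ (norm_nonneg _) (hfb k) 2
      _ ≤ 2 := sum_finset_inv_sq F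
  have hxle : ‖x‖ ≤ 2 := by nlinarith [norm_nonneg x]
  have hκ0 : κ 0 ≤ ‖x‖ := by
    have h1 := huS 0
    have h2 : |S 0 u| = |(inner ℝ (v 0) x : ℝ)| := by rw [hinner 0]
    have h3 : |(inner ℝ (v 0) x : ℝ)| ≤ ‖v 0‖ * ‖x‖ := abs_real_inner_le_norm _ _
    rw [hvnorm 0, one_mul] at h3
    linarith
  have hxpos : 0 < ‖x‖ := lt_of_lt_of_le (hκpos 0) hκ0
  refine ⟨fun j => κ j / 2, fun j => div_pos (hκpos j) two_pos, ?_, ?_⟩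
  · have heq : ∀ j : ℕ, (1/((j:ℝ)+1)) * Real.log (κ j / 2)
        = -(Real.log 16 / ((j:ℝ)+1)) - 5 * (Real.log ((j:ℝ)+1) / ((j:ℝ)+1)) := by
      intro j
      have hj0 : (0:ℝ) < (j:ℝ)+1 := by positivity
      have hδeq : κ j / 2 = (16*((j:ℝ)+1)^5)⁻¹ := by
        rw [hκ]; simp only; field_simp; ring
      rw [hδeq, Real.log_inv, Real.log_mul (by norm_num) (by positivity), Real.log_pow]
      push_cast
      field_simp
      ring
    have l1 : Tendsto (fun j : ℕ => Real.log 16 / ((j:ℝ)+1)) atTop (nhds 0) := by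
      have h := tendsto_one_div_add_atTop_nhds_zero_nat.const_mul (Real.log 16)
      rw [mul_zero] at h
      exact h.congr fun n => by rw [mul_one_div]
    have l2 : Tendsto (fun j : ℕ => Real.log ((j:ℝ)+1) / ((j:ℝ)+1)) atTop (nhds 0) := by
      have hr := Real.tendsto_pow_log_div_mul_add_atTop 1 0 1 one_ne_zero
      have hcmp : Tendsto (fun j : ℕ => (j:ℝ)+1) atTop atTop :=
        tendsto_atTop_add_const_right _ 1 tendsto_natCast_atTop_atTop
      have := hr.comp hcmp
      exact this.congr fun j => by
        simp only [Function.comp_apply, pow_one, one_mul, add_zero]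
    have lfinal := (l1.neg).sub (l2.const_mul 5)
    exact Tendsto.congr (fun j => (heq j).symm) (by simpa using lfinal)
  · refine ⟨‖x‖⁻¹ • x, ?_, ?_⟩
    · rw [norm_smul, norm_inv, norm_norm, inv_mul_cancel₀ (ne_of_gt hxpos)]
    · intro j
      have hφval : φ j (‖x‖⁻¹ • x) = ‖x‖⁻¹ * S j u := by
        rw [← hvφ j, real_inner_smul_right, hinner j]
      rw [hφval, abs_mul, abs_inv, abs_norm]
      have h2 : (2:ℝ)⁻¹ ≤ ‖x‖⁻¹ := inv_anti₀ hxpos hxle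
      calc κ j / 2 = 2⁻¹ * κ j := by ring
        _ ≤ ‖x‖⁻¹ * |S j u| :=
            mul_le_mul h2 (huS j) (hκpos j).le (inv_nonneg.2 (norm_nonneg x))
end

section
/- Let H be a real Hilbert space and (φ_j)_{j∈ℕ} bounded linear functionals on H of norm 1. Then there exists a unit vector x ∈ H and a constant c > 0 such that |φ_j(x)| ≥ c·j⁻⁵ for all j ∈ ℕ. -/
open Filter Finset

section aux

variable {H : Type*} [NormedAddCommGroup H] [InnerProductSpace ℝ H] [CompleteSpace H]

private noncomputable def stmt5sgn (b : Bool) : ℝ := if b then 1 else -1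

private lemma stmt5sgn_abs (b : Bool) : |stmt5sgn b| = 1 := by
  cases b <;> simp [stmt5sgn]

private lemma stmt5sgn_not (b : Bool) : stmt5sgn (!b) = - stmt5sgn b := by
  cases b <;> simp [stmt5sgn]

private noncomputable def stmt5t (k : ℕ) : ℝ := (((k : ℝ) + 1) ^ 2)⁻¹

private lemma stmt5t_pos (k : ℕ) : 0 < stmt5t k := by
  have : (0:ℝ) < ((k:ℝ) + 1) ^ 2 := by positivity
  exact inv_pos.mpr this

private lemma stmt5t_summable : Summable stmt5t := by
  have h : Summable (fun n : ℕ => ((n : ℝ) ^ 2)⁻¹) := by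
    simpa using Real.summable_one_div_nat_pow.mpr one_lt_two
  have h2 : Summable (fun n : ℕ => (((n + 1 : ℕ) : ℝ) ^ 2)⁻¹) :=
    (summable_nat_add_iff 1).mpr h
  refine h2.congr fun n => ?_
  simp [stmt5t]

end aux

/-- Quantitative version: for norm-one functionals `(φ_j)` on a real
Hilbert space there are a unit vector `x` and `c > 0` with `|φ_j x| ≥ c·j⁻⁵` for all `j`
(here `j : ℕ` stands for the `(j+1)`-st functional of the paper). -/
theorem stmt5 {H : Type*} [NormedAddCommGroup H] [InnerProductSpace ℝ H] [CompleteSpace H]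
    (φ : ℕ → (H →L[ℝ] ℝ)) (hφ : ∀ j, ‖φ j‖ = 1) :
    ∃ x : H, ‖x‖ = 1 ∧ ∃ c : ℝ, 0 < c ∧
      ∀ j : ℕ, c * (((j : ℝ) + 1) ^ 5)⁻¹ ≤ |φ j x| := by
  classical
  -- Riesz representation
  set e : ℕ → H := fun j => (InnerProductSpace.toDual ℝ H).symm (φ j) with he
  have hφe : ∀ j (z : H), φ j z = inner ℝ (e j) z := by
    intro j z
    exact (InnerProductSpace.toDual_symm_apply (𝕜 := ℝ)).symm
  have hen : ∀ j, ‖e j‖ = 1 := by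
    intro j
    rw [he]
    simpa using ((InnerProductSpace.toDual ℝ H).symm.norm_map (φ j)).trans (hφ j)
  -- the summand
  set f : ℕ → (ℕ → Bool) → H := fun k ε => (stmt5sgn (ε k) * stmt5t k) • e k with hf
  have hfn : ∀ k (ε : ℕ → Bool), ‖f k ε‖ = stmt5t k := by
    intro k ε
    simp [hf, norm_smul, Real.norm_eq_abs, abs_mul, stmt5sgn_abs, hen k,
      abs_of_pos (stmt5t_pos k)]
  have hfsum : ∀ ε : ℕ → Bool, Summable fun k => f k ε := by
    intro ε
    exact Summable.of_norm (by simpa only [hfn] using stmt5t_summable)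
  set g : (ℕ → Bool) → H := fun ε => ∑' k, f k ε with hg
  -- continuity of g
  have hfc : ∀ k, Continuous fun ε : ℕ → Bool => f k ε := by
    intro k
    show Continuous fun ε : ℕ → Bool => (stmt5sgn (ε k) * stmt5t k) • e k
    exact (((continuous_of_discreteTopology : Continuous stmt5sgn).comp
      (continuous_apply k)).mul continuous_const).smul continuous_const
  have hgc : Continuous g := by
    refine (tendstoUniformly_tsum stmt5t_summable ?_).continuous
      (Frequently.of_forall fun N => continuous_finset_sum _ fun k _ => hfc k)
    intro k ε; exact le_of_eq (hfn k ε)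
  -- maximize ‖g ε‖ over the compact space of sign sequences
  obtain ⟨ε, -, hmaxOn⟩ := isCompact_univ.exists_isMaxOn
    ⟨fun _ => true, Set.mem_univ _⟩ hgc.norm.continuousOn
  have hmax' : ∀ ε', ‖g ε'‖ ≤ ‖g ε‖ := fun ε' => hmaxOn (Set.mem_univ ε')
  set y : H := g ε with hy
  -- key estimate: t j ≤ |⟪y, e j⟫|
  have key : ∀ j, stmt5t j ≤ |(inner ℝ y (e j) : ℝ)| := by
    intro j
    set s : ℝ := stmt5sgn (ε j) with hs
    set c : ℝ := 2 * s * stmt5t j with hc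
    set ε' : ℕ → Bool := Function.update ε j (!(ε j)) with hε'
    have htsum : ∑' k, (f k ε - f k ε') = c • e j := by
      rw [tsum_eq_single j]
      · have hj : ε' j = !(ε j) := Function.update_self _ _ _
        rw [hf]
        simp only [hj, stmt5sgn_not, ← hs, ← sub_smul, hc]
        ring_nf
      · intro k hk
        have hk' : ε' k = ε k := Function.update_of_ne hk _ _
        simp [hf, hk']
    have hflip : y - g ε' = c • e j := by
      rw [hy, hg, ← Summable.tsum_sub (hfsum ε) (hfsum ε'), htsum]
    have hle : ‖y - c • e j‖ ≤ ‖y‖ := by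
      have : y - c • e j = g ε' := by rw [← hflip]; abel
      rw [this]; exact hmax' ε'
    have hsq : ‖y - c • e j‖ ^ 2 ≤ ‖y‖ ^ 2 :=
      pow_le_pow_left₀ (norm_nonneg _) hle 2
    rw [norm_sub_sq_real] at hsq
    have hnc : ‖c • e j‖ ^ 2 = c ^ 2 := by
      rw [norm_smul, hen j, mul_one, Real.norm_eq_abs, sq_abs]
    rw [hnc, real_inner_smul_right] at hsq
    have h1 : c ^ 2 ≤ 2 * (c * inner ℝ y (e j)) := by linarith
    have hss : s * s = 1 := by
      rw [hs]; cases ε j <;> norm_num [stmt5sgn]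
    have ht := stmt5t_pos j
    have hs2 : s ^ 2 = 1 := by rw [sq]; exact hss
    have hc2 : c ^ 2 = 4 * stmt5t j ^ 2 := by
      calc c ^ 2 = 4 * s ^ 2 * stmt5t j ^ 2 := by rw [hc]; ring
        _ = 4 * stmt5t j ^ 2 := by rw [hs2]; ring
    have h4 : 4 * stmt5t j ^ 2 ≤ 4 * (stmt5t j * (s * inner ℝ y (e j))) := by
      calc 4 * stmt5t j ^ 2 = c ^ 2 := hc2.symm
        _ ≤ 2 * (c * inner ℝ y (e j)) := h1
        _ = 4 * (stmt5t j * (s * inner ℝ y (e j))) := by rw [hc]; ring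
    have h2 : stmt5t j ≤ s * inner ℝ y (e j) :=
      (mul_le_mul_iff_right₀ ht).mp
        (by linarith : stmt5t j * stmt5t j ≤ stmt5t j * (s * inner ℝ y (e j)))
    calc stmt5t j ≤ s * inner ℝ y (e j) := h2
      _ ≤ |(s * inner ℝ y (e j) : ℝ)| := le_abs_self _
      _ = |(inner ℝ y (e j) : ℝ)| := by rw [abs_mul, hs, stmt5sgn_abs, one_mul]
  -- y ≠ 0
  have hy0 : 0 < ‖y‖ := by
    rcases eq_or_ne y 0 with h | h
    · exfalso
      have := key 0
      rw [h] at this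
      simp only [inner_zero_left, abs_zero] at this
      exact absurd this (not_le.mpr (stmt5t_pos 0))
    · exact norm_pos_iff.mpr h
  -- conclude
  refine ⟨‖y‖⁻¹ • y, ?_, ‖y‖⁻¹, inv_pos.mpr hy0, ?_⟩
  · rw [norm_smul, norm_inv, norm_norm, inv_mul_cancel₀ (ne_of_gt hy0)]
  · intro j
    have hj1 : (1:ℝ) ≤ (j:ℝ) + 1 := by
      have := Nat.cast_nonneg (α := ℝ) j; linarith
    have hpow : ((j:ℝ) + 1) ^ 2 ≤ ((j:ℝ) + 1) ^ 5 :=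
      pow_le_pow_right₀ hj1 (by norm_num)
    have h5 : ((((j:ℝ) + 1) ^ 5)⁻¹ : ℝ) ≤ stmt5t j := by
      rw [stmt5t]
      exact inv_anti₀ (by positivity) hpow
    have hval : |φ j (‖y‖⁻¹ • y)| = ‖y‖⁻¹ * |φ j y| := by
      rw [map_smul, smul_eq_mul, abs_mul, abs_of_pos (inv_pos.mpr hy0)]
    rw [hval, hφe j y, real_inner_comm]
    exact mul_le_mul_of_nonneg_left (h5.trans (key j)) (le_of_lt (inv_pos.mpr hy0))
end

section
/- Let X be a Banach space and x₁, x₂ ∈ X with ‖x₁‖ ≤ 1, ‖x₂‖ ≤ 1, ‖x₁‖ ≥ μ₁, and dist(x₂, span(x₁)) ≥ μ₂ for some 0 < μ₁, μ₂ ≤ 1. Then inf_{t∈ℝ} ‖t·x₁ + (1−t)·x₂‖ ≥ μ₁·μ₂/(2√5). -/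
/-- In a Banach space, if `‖x₁‖ ≤ 1`, `‖x₂‖ ≤ 1`, `‖x₁‖ ≥ μ₁` and
`dist(x₂, span x₁) ≥ μ₂` with `0 < μ₁, μ₂ ≤ 1`, then every affine combination
`t•x₁ + (1-t)•x₂` has norm at least `μ₁·μ₂/(2√5)`. -/
theorem stmt6 {X : Type*} [NormedAddCommGroup X] [NormedSpace ℝ X] [CompleteSpace X]
    (x₁ x₂ : X) (μ₁ μ₂ : ℝ)
    (hμ₁ : 0 < μ₁) (hμ₁' : μ₁ ≤ 1) (hμ₂ : 0 < μ₂) (hμ₂' : μ₂ ≤ 1)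
    (hx₁ : ‖x₁‖ ≤ 1) (hx₂ : ‖x₂‖ ≤ 1)
    (hx₁' : μ₁ ≤ ‖x₁‖)
    (hx₂' : μ₂ ≤ Metric.infDist x₂ (Submodule.span ℝ {x₁} : Set X)) :
    ∀ t : ℝ, μ₁ * μ₂ / (2 * Real.sqrt 5) ≤ ‖t • x₁ + (1 - t) • x₂‖ := by
  have key : ∀ c : ℝ, μ₂ ≤ ‖x₂ - c • x₁‖ := by
    intro c
    calc μ₂ ≤ Metric.infDist x₂ (Submodule.span ℝ {x₁} : Set X) := hx₂'
      _ ≤ dist x₂ (c • x₁) := Metric.infDist_le_dist_of_mem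
            (Submodule.smul_mem _ c (Submodule.mem_span_singleton_self x₁))
      _ = ‖x₂ - c • x₁‖ := dist_eq_norm _ _
  have hr : (2:ℝ) ≤ Real.sqrt 5 := by
    nlinarith [Real.sq_sqrt (by norm_num : (5:ℝ) ≥ 0), Real.sqrt_nonneg 5]
  have hrpos : (0:ℝ) < Real.sqrt 5 := by linarith
  intro t
  by_cases hcase : μ₁ / (2 * Real.sqrt 5) ≤ |1 - t|
  · -- |1-t| is large: use distance to span
    have ht : (1:ℝ) - t ≠ 0 := by
      intro h
      rw [h, abs_zero] at hcase
      have : 0 < μ₁ / (2 * Real.sqrt 5) := by positivity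
      linarith
    have hc : (1 - t) * (-(t / (1 - t))) = -t := by field_simp
    have hv : t • x₁ + (1 - t) • x₂ = (1 - t) • (x₂ - (-(t / (1 - t))) • x₁) := by
      rw [smul_sub, smul_smul, hc]
      module
    rw [hv, norm_smul, Real.norm_eq_abs]
    have h1 := key (-(t / (1 - t)))
    have h2 : μ₁ / (2 * Real.sqrt 5) * μ₂ ≤ |1 - t| * ‖x₂ - (-(t / (1 - t))) • x₁‖ := by
      apply mul_le_mul hcase h1 (le_of_lt hμ₂) (abs_nonneg _)
    calc μ₁ * μ₂ / (2 * Real.sqrt 5) = μ₁ / (2 * Real.sqrt 5) * μ₂ := by ring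
      _ ≤ _ := h2
  · -- |1-t| small, so the vector is close to a multiple of x₁
    push_neg at hcase
    set N := ‖t • x₁ + (1 - t) • x₂‖ with hN
    have hb : ‖t • x₁‖ ≤ N + ‖(1 - t) • x₂‖ := by
      calc ‖t • x₁‖ = ‖(t • x₁ + (1 - t) • x₂) - (1 - t) • x₂‖ := by
            rw [add_sub_cancel_right]
        _ ≤ N + ‖(1 - t) • x₂‖ := norm_sub_le _ _
    rw [norm_smul, norm_smul, Real.norm_eq_abs, Real.norm_eq_abs] at hb
    have ha : (1:ℝ) ≤ |t| + |1 - t| := by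
      have h := abs_add_le t (1 - t)
      simp only [add_sub_cancel, abs_one] at h
      linarith
    have hx1b : |t| * μ₁ ≤ |t| * ‖x₁‖ :=
      mul_le_mul_of_nonneg_left hx₁' (abs_nonneg _)
    have hx2b : |1 - t| * ‖x₂‖ ≤ |1 - t| := by
      calc |1 - t| * ‖x₂‖ ≤ |1 - t| * 1 :=
            mul_le_mul_of_nonneg_left hx₂ (abs_nonneg _)
        _ = |1 - t| := mul_one _
    have hNn : 0 ≤ N := norm_nonneg _
    have habs1 : 0 ≤ |t| := abs_nonneg t
    have habs2 : 0 ≤ |1 - t| := abs_nonneg (1 - t)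
    have hs2 : |1 - t| * (2 * Real.sqrt 5) < μ₁ := (lt_div_iff₀ (by positivity)).mp hcase
    have hNge : μ₁ - 2 * |1 - t| ≤ N := by
      nlinarith [mul_nonneg (by linarith : (0:ℝ) ≤ |t| + |1 - t| - 1) hμ₁.le,
        mul_nonneg habs2 (sub_nonneg.mpr hμ₁')]
    have h3 : (μ₁ - 2 * |1 - t|) * (2 * Real.sqrt 5) ≤ N * (2 * Real.sqrt 5) :=
      mul_le_mul_of_nonneg_right hNge (by positivity)
    have h4 : 0 ≤ μ₁ * (2 * Real.sqrt 5 - 2 - μ₂) := mul_nonneg hμ₁.le (by linarith)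
    rw [div_le_iff₀ (by positivity)]
    nlinarith [h3, h4, hs2]
end

section
/- In the Euclidean plane ℝ², suppose x₁, x₂ ∈ B(0,1) with ‖x₁‖₂ ≥ μ₁ and the distance from x₂ to the line through 0 and x₁ is at least μ₂, where 0 < μ₁, μ₂ ≤ 1. Then the distance from the origin to the line through x₁ and x₂ is at least μ₁·μ₂/√5, i.e., inf_{t∈ℝ} ‖t x₁ + (1−t) x₂‖₂ ≥ μ₁·μ₂/√5. -/
/-- Auxiliary real inequality. -/
lemma stmt7_aux (μ₁ μ₂ a e c t : ℝ) (hμ₁ : 0 < μ₁) (hμ₂ : 0 < μ₂)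
    (ha : μ₁ ≤ a) (ha1 : a ≤ 1) (he : μ₂ ≤ e) (he1 : e ≤ 1) (hc : |c| * a ≤ 1) :
    μ₁ ^ 2 * μ₂ ^ 2 / 5 ≤ (t + (1 - t) * c) ^ 2 * a ^ 2 + (1 - t) ^ 2 * e ^ 2 := by
  have ha0 : 0 < a := lt_of_lt_of_le hμ₁ ha
  have he0 : 0 < e := lt_of_lt_of_le hμ₂ he
  have hca1 : -1 ≤ a * c := by nlinarith [neg_abs_le c]
  have hca2 : a * c ≤ 1 := by nlinarith [le_abs_self c]
  have h5bound : e ^ 2 + a ^ 2 * (1 - c) ^ 2 ≤ 5 := by nlinarith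
  have hC : (a * e) ^ 2 ≤ (e ^ 2 + a ^ 2 * (1 - c) ^ 2) *
      ((t + (1 - t) * c) ^ 2 * a ^ 2 + (1 - t) ^ 2 * e ^ 2) := by
    nlinarith [sq_nonneg (e * (e * (1 - t)) - a * (1 - c) * (a * (t + (1 - t) * c)))]
  have hRHS0 : 0 ≤ (t + (1 - t) * c) ^ 2 * a ^ 2 + (1 - t) ^ 2 * e ^ 2 := by positivity
  have h1 : μ₁ ^ 2 * μ₂ ^ 2 ≤ (a * e) ^ 2 := by
    nlinarith [mul_le_mul ha he hμ₂.le ha0.le, mul_pos hμ₁ hμ₂]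
  nlinarith [mul_le_mul_of_nonneg_right h5bound hRHS0]

/-- Euclidean plane version: if `x₁, x₂` lie in the closed unit ball,
`‖x₁‖ ≥ μ₁`, and the distance of `x₂` to the line through `0` and `x₁` is at least `μ₂`
(`0 < μ₁, μ₂ ≤ 1`), then the line through `x₁` and `x₂` stays at distance at least
`μ₁·μ₂/√5` from the origin. -/
theorem stmt7 (x₁ x₂ : EuclideanSpace ℝ (Fin 2)) (μ₁ μ₂ : ℝ)
    (hμ₁ : 0 < μ₁) (hμ₁' : μ₁ ≤ 1) (hμ₂ : 0 < μ₂) (hμ₂' : μ₂ ≤ 1)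
    (hx₁ : ‖x₁‖ ≤ 1) (hx₂ : ‖x₂‖ ≤ 1)
    (hx₁' : μ₁ ≤ ‖x₁‖)
    (hx₂' : μ₂ ≤ Metric.infDist x₂ (Submodule.span ℝ {x₁} : Set (EuclideanSpace ℝ (Fin 2)))) :
    ∀ t : ℝ, μ₁ * μ₂ / Real.sqrt 5 ≤ ‖t • x₁ + (1 - t) • x₂‖ := by
  intro t
  set K : Submodule ℝ (EuclideanSpace ℝ (Fin 2)) := Submodule.span ℝ {x₁} with hK
  set p : EuclideanSpace ℝ (Fin 2) := (K.orthogonalProjection x₂ : EuclideanSpace ℝ (Fin 2)) with hp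
  set q : EuclideanSpace ℝ (Fin 2) := x₂ - p with hq
  have hpK : p ∈ K := (K.orthogonalProjection x₂).2
  have hqK : q ∈ Kᗮ := K.sub_starProjection_mem_orthogonal x₂
  obtain ⟨c, hc⟩ := Submodule.mem_span_singleton.mp hpK
  have hinner : (inner ℝ x₁ q : ℝ) = 0 :=
    Submodule.inner_right_of_mem_orthogonal (Submodule.mem_span_singleton_self x₁) hqK
  have hinnerpq : (inner ℝ p q : ℝ) = 0 :=
    Submodule.inner_right_of_mem_orthogonal hpK hqK
  have hx2 : x₂ = p + q := by simp [hq]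
  have hpyth : ‖x₂‖ ^ 2 = ‖p‖ ^ 2 + ‖q‖ ^ 2 := by
    rw [hx2, norm_add_sq_real, hinnerpq]; ring
  have hq1 : ‖q‖ ≤ 1 := by nlinarith [norm_nonneg p, norm_nonneg q, norm_nonneg x₂]
  have hp1 : ‖p‖ ≤ 1 := by nlinarith [norm_nonneg p, norm_nonneg q, norm_nonneg x₂]
  have hμ₂q : μ₂ ≤ ‖q‖ := by
    refine hx₂'.trans ?_
    have := Metric.infDist_le_dist_of_mem (x := x₂)
      (show p ∈ (K : Set (EuclideanSpace ℝ (Fin 2))) from hpK)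
    rwa [dist_eq_norm] at this
  have hcnorm : |c| * ‖x₁‖ ≤ 1 := by
    have hpc : ‖p‖ = |c| * ‖x₁‖ := by rw [← hc, norm_smul, Real.norm_eq_abs]
    linarith [hpc ▸ hp1]
  have hvec : t • x₁ + (1 - t) • x₂ = (t + (1 - t) * c) • x₁ + (1 - t) • q := by
    rw [hx2, ← hc]; module
  have hnorm : ‖t • x₁ + (1 - t) • x₂‖ ^ 2
      = (t + (1 - t) * c) ^ 2 * ‖x₁‖ ^ 2 + (1 - t) ^ 2 * ‖q‖ ^ 2 := by
    rw [hvec, norm_add_sq_real, real_inner_smul_left, real_inner_smul_right, hinner,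
      norm_smul, norm_smul]
    simp only [Real.norm_eq_abs, mul_pow, sq_abs, mul_zero]
    ring
  have hkey : μ₁ ^ 2 * μ₂ ^ 2 / 5 ≤ ‖t • x₁ + (1 - t) • x₂‖ ^ 2 := by
    rw [hnorm]
    exact stmt7_aux μ₁ μ₂ ‖x₁‖ ‖q‖ c t hμ₁ hμ₂ hx₁' hx₁ hμ₂q hq1 hcnorm
  have hlhs : (μ₁ * μ₂ / Real.sqrt 5) ^ 2 = μ₁ ^ 2 * μ₂ ^ 2 / 5 := by
    rw [div_pow, Real.sq_sqrt (by norm_num : (0:ℝ) ≤ 5)]; ring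
  have hlhs0 : 0 ≤ μ₁ * μ₂ / Real.sqrt 5 := by positivity
  calc μ₁ * μ₂ / Real.sqrt 5 = Real.sqrt ((μ₁ * μ₂ / Real.sqrt 5) ^ 2) :=
        (Real.sqrt_sq hlhs0).symm
    _ ≤ Real.sqrt (‖t • x₁ + (1 - t) • x₂‖ ^ 2) := by
        apply Real.sqrt_le_sqrt; rw [hlhs]; exact hkey
    _ = ‖t • x₁ + (1 - t) • x₂‖ := Real.sqrt_sq (norm_nonneg _)
end

section
/- Let X be a finite-dimensional Banach space of dimension n and let (V_j)_{j∈ℕ} be a sequence of hyperplanes in X. Then for (Lebesgue) almost every x ∈ X, there exists ε > 0 such that dist(x/‖x‖, V_j) ≥ ε·j⁻² for all j ∈ ℕ; in particular span(x) is a well-separating common complement of (V_j). -/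
open Filter MeasureTheory Metric Set ENNReal

lemma strip_bound {X : Type*} [NormedAddCommGroup X] [NormedSpace ℝ X]
    [MeasurableSpace X] [BorelSpace X] [FiniteDimensional ℝ X]
    (μ : Measure X) [μ.IsAddHaarMeasure]
    (f : X →L[ℝ] ℝ) (u : X) (hu1 : f u = 1) (hu2 : ‖u‖ ≤ 2)
    (R a t : ℝ) (ht : 0 < t) (ht1 : t ≤ 1) :
    μ {x | ‖x‖ ≤ R ∧ f x ∈ Set.Ico a (a + t)} ≤
      ENNReal.ofReal t * μ (Metric.closedBall 0 (R + 4)) := by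
  set A : Set X := {x | ‖x‖ ≤ R ∧ f x ∈ Set.Ico a (a + t)} with hAdef
  have hAm : MeasurableSet A := by
    have : A = {x : X | ‖x‖ ≤ R} ∩ f ⁻¹' Set.Ico a (a + t) := rfl
    rw [this]
    exact ((isClosed_le continuous_norm continuous_const).measurableSet).inter
      (f.continuous.measurable measurableSet_Ico)
  set K : ℕ := ⌈t⁻¹⌉₊ with hK
  have hK1 : t⁻¹ ≤ (K : ℝ) := Nat.le_ceil _
  have hKt : (K : ℝ) * t ≤ 2 := by
    have h2 : (K : ℝ) < t⁻¹ + 1 := Nat.ceil_lt_add_one (by positivity)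
    have h3 : (K : ℝ) * t < (t⁻¹ + 1) * t := by nlinarith
    have h4 : (t⁻¹ + 1) * t = 1 + t := by field_simp
    nlinarith
  set T : ℕ → Set X := fun m => (fun x => x + ((m : ℝ) * t) • u) ⁻¹' A with hT
  have hTm : ∀ m, MeasurableSet (T m) :=
    fun m => hAm.preimage (measurable_id.add_const _)
  have hTμ : ∀ m, μ (T m) = μ A := fun m => measure_preimage_add_right μ _ A
  have hTsub : ∀ m ∈ Finset.range K, T m ⊆ Metric.closedBall 0 (R + 4) := by
    intro m hm x hx
    obtain ⟨hx1, hx2⟩ := hx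
    have hmK : (m : ℝ) ≤ K := by exact_mod_cast (Finset.mem_range.mp hm).le
    have h0 : (0:ℝ) ≤ (m : ℝ) * t := by positivity
    have hnu : ‖((m : ℝ) * t) • u‖ ≤ 4 := by
      rw [norm_smul, Real.norm_eq_abs, abs_of_nonneg h0]
      nlinarith [norm_nonneg u, mul_le_mul_of_nonneg_right hmK ht.le]
    simp only [Metric.mem_closedBall, dist_zero_right]
    calc ‖x‖ = ‖x + ((m : ℝ) * t) • u - ((m : ℝ) * t) • u‖ := by
          congr 1; abel
    _ ≤ ‖x + ((m : ℝ) * t) • u‖ + ‖((m : ℝ) * t) • u‖ := norm_sub_le _ _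
    _ ≤ R + 4 := add_le_add hx1 hnu
  have hdisj : (↑(Finset.range K) : Set ℕ).PairwiseDisjoint T := by
    intro i hi j hj hij
    refine Set.disjoint_left.mpr fun x hxi hxj => hij ?_
    have h1 := hxi.2
    have h2 := hxj.2
    simp only [map_add, f.map_smul, hu1, smul_eq_mul, mul_one, Set.mem_Ico] at h1 h2
    have hij1 : (i : ℝ) < (j : ℝ) + 1 := by nlinarith [h1.1, h1.2, h2.1, h2.2, ht]
    have hij2 : (j : ℝ) < (i : ℝ) + 1 := by nlinarith [h1.1, h1.2, h2.1, h2.2, ht]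
    have a1 : i < j + 1 := by exact_mod_cast hij1
    have a2 : j < i + 1 := by exact_mod_cast hij2
    omega
  have hsum : (K : ℝ≥0∞) * μ A ≤ μ (Metric.closedBall 0 (R + 4)) := by
    have h1 : μ (⋃ m ∈ Finset.range K, T m) = ∑ m ∈ Finset.range K, μ (T m) :=
      measure_biUnion_finset hdisj (fun m _ => hTm m)
    have h2 : μ (⋃ m ∈ Finset.range K, T m) ≤ μ (Metric.closedBall 0 (R + 4)) :=
      measure_mono (Set.iUnion₂_subset hTsub)
    calc (K : ℝ≥0∞) * μ A = ∑ m ∈ Finset.range K, μ (T m) := by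
          simp [hTμ, Finset.sum_const, Finset.card_range, nsmul_eq_mul]
    _ = μ (⋃ m ∈ Finset.range K, T m) := h1.symm
    _ ≤ _ := h2
  have hone : (1 : ℝ≥0∞) ≤ ENNReal.ofReal t * K := by
    have hk' : ENNReal.ofReal t⁻¹ ≤ (K : ℝ≥0∞) := by
      rw [← ENNReal.ofReal_natCast]
      exact ENNReal.ofReal_le_ofReal hK1
    calc (1:ℝ≥0∞) = ENNReal.ofReal t * ENNReal.ofReal t⁻¹ := by
          rw [← ENNReal.ofReal_mul ht.le, mul_inv_cancel₀ ht.ne', ENNReal.ofReal_one]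
    _ ≤ ENNReal.ofReal t * K := mul_le_mul_right hk' _
  calc μ A = 1 * μ A := (one_mul _).symm
  _ ≤ (ENNReal.ofReal t * K) * μ A := mul_le_mul_left hone _
  _ = ENNReal.ofReal t * ((K : ℝ≥0∞) * μ A) := by ring
  _ ≤ ENNReal.ofReal t * μ (Metric.closedBall 0 (R + 4)) := mul_le_mul_right hsum _

set_option maxHeartbeats 1200000 in
/-- In a finite-dimensional Banach space `X` of dimension `n`, for a
sequence of hyperplanes `(V_j)` and Lebesgue measure (obtained from any basis of `X`),
almost every `x ∈ X` spans a common complement of all the `V_j` and there is `ε > 0`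
with `dist(x/‖x‖, V_j) ≥ ε·j⁻²` for all `j`; in particular `span{x}` is a
well-separating common complement (here `j : ℕ` stands for the `(j+1)`-st index of the
paper). -/
theorem stmt10 {X : Type*} [NormedAddCommGroup X] [NormedSpace ℝ X]
    [MeasurableSpace X] [BorelSpace X] (n : ℕ) [FiniteDimensional ℝ X]
    (hdim : Module.finrank ℝ X = n) (b : Module.Basis (Fin n) ℝ X)
    (V : ℕ → Submodule ℝ X)
    (hV : ∀ j, Module.finrank ℝ (X ⧸ V j) = 1) :
    ∀ᵐ x ∂b.addHaar,
      (∀ j, IsCompl (V j) (Submodule.span ℝ {x})) ∧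
      ∃ ε : ℝ, 0 < ε ∧
        ∀ j : ℕ, ε * (((j : ℝ) + 1) ^ 2)⁻¹ ≤ Metric.infDist (‖x‖⁻¹ • x) (V j : Set X) := by
  classical
  have hq0 := Submodule.finrank_quotient_add_finrank (V 0)
  rw [hV 0, hdim] at hq0
  have hnt : Nontrivial X := by
    have : 0 < Module.finrank ℝ X := by rw [hdim]; omega
    exact Module.nontrivial_of_finrank_pos this
  -- construct functionals with kernel V j, norm at most 2, and good witness vectors
  have hfun : ∀ j, ∃ g : X →L[ℝ] ℝ, ∃ u : X,
      LinearMap.ker (g : X →ₗ[ℝ] ℝ) = V j ∧ g u = 1 ∧ ‖u‖ ≤ 2 ∧ ‖g‖ ≤ 2 := by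
    intro j
    obtain ⟨e⟩ : Nonempty ((X ⧸ V j) ≃ₗ[ℝ] ℝ) :=
      FiniteDimensional.nonempty_linearEquiv_of_finrank_eq
        (by rw [hV j, Module.finrank_self])
    set φ : X →ₗ[ℝ] ℝ := e.toLinearMap ∘ₗ (V j).mkQ with hφ
    have hkerφ : LinearMap.ker φ = V j := by
      rw [hφ, LinearMap.ker_comp, LinearEquiv.ker, Submodule.comap_bot, Submodule.ker_mkQ]
    have hφ1 : ∃ x, φ x = 1 := by
      obtain ⟨x, hx⟩ := Submodule.mkQ_surjective (V j) (e.symm 1)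
      exact ⟨x, by simp [hφ, hx]⟩
    set ψ := LinearMap.toContinuousLinearMap φ with hψ
    have hψφ : ∀ x, ψ x = φ x := fun x => rfl
    have hψnorm : 0 < ‖ψ‖ := by
      rw [norm_pos_iff]
      intro h
      obtain ⟨x, hx⟩ := hφ1
      have hx0 : ψ x = 0 := by rw [h]; rfl
      rw [hψφ, hx] at hx0
      norm_num at hx0
    obtain ⟨v, hv1, hv2⟩ : ∃ v : X, ‖v‖ < 1 ∧ ‖ψ‖ / 2 < ‖ψ v‖ :=
      ψ.exists_lt_apply_of_lt_opNorm (by linarith)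
    have hvabs : ‖ψ‖ / 2 < |ψ v| := by rwa [Real.norm_eq_abs] at hv2
    have hψv : ψ v ≠ 0 := by
      intro h; rw [h, abs_zero] at hvabs; linarith
    have hψvpos : 0 < |ψ v| := by positivity
    refine ⟨(ψ v)⁻¹ • ψ, v, ?_, ?_, by linarith, ?_⟩
    · ext x
      rw [LinearMap.mem_ker, ← hkerφ, LinearMap.mem_ker]
      have h1 : (((ψ v)⁻¹ • ψ : X →L[ℝ] ℝ) : X →ₗ[ℝ] ℝ) x = (ψ v)⁻¹ * φ x := rfl
      rw [h1, mul_eq_zero]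
      simp [hψv]
    · have h1 : ((ψ v)⁻¹ • ψ) v = (ψ v)⁻¹ * ψ v := rfl
      rw [h1, inv_mul_cancel₀ hψv]
    · have h1 : ‖(ψ v)⁻¹ • ψ‖ ≤ ‖(ψ v)⁻¹‖ * ‖ψ‖ := ψ.opNorm_smul_le _
      have h2 : ‖(ψ v)⁻¹‖ = |ψ v|⁻¹ := by rw [Real.norm_eq_abs, abs_inv]
      have h3 : |ψ v|⁻¹ * |ψ v| = 1 := inv_mul_cancel₀ hψvpos.ne'
      have h4 : |ψ v|⁻¹ * ‖ψ‖ ≤ 2 := by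
        nlinarith [inv_nonneg.mpr (abs_nonneg (ψ v))]
      rw [h2] at h1
      linarith
  choose f u hf2 huu hun hf1 using hfun
  set μ := b.addHaar with hμ
  -- summability constant
  have hsummable : Summable (fun j : ℕ => (((j : ℝ) + 1) ^ 2)⁻¹) := by
    have h1 : Summable (fun n : ℕ => ((n : ℝ) ^ 2)⁻¹) :=
      Real.summable_nat_pow_inv.mpr one_lt_two
    have h2 := (summable_nat_add_iff 1).mpr h1
    apply h2.congr
    intro j
    push_cast
    ring_nf
  set c := ∑' j : ℕ, ENNReal.ofReal ((((j : ℝ) + 1) ^ 2)⁻¹) with hc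
  have hcfin : c ≠ ⊤ := by
    rw [hc, ← ENNReal.ofReal_tsum_of_nonneg (fun j => by positivity) hsummable]
    exact ENNReal.ofReal_ne_top
  have key : ∀ᵐ x ∂μ, x ≠ 0 ∧ ∃ ε : ℝ, 0 < ε ∧ ∀ j : ℕ,
      ε * (((j : ℝ) + 1) ^ 2)⁻¹ * ‖x‖ ≤ ‖f j x‖ := by
    rw [ae_iff]
    set B : Set X :=
      {x | ∀ ε : ℝ, 0 < ε → ∃ j : ℕ, ‖f j x‖ < ε * (((j : ℝ) + 1) ^ 2)⁻¹ * ‖x‖} with hB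
    have hsub : {x : X | ¬(x ≠ 0 ∧ ∃ ε : ℝ, 0 < ε ∧ ∀ j : ℕ,
        ε * (((j : ℝ) + 1) ^ 2)⁻¹ * ‖x‖ ≤ ‖f j x‖)} ⊆ {(0 : X)} ∪ B := by
      intro x hx
      by_cases hx0 : x = 0
      · exact Or.inl hx0
      · refine Or.inr fun ε hε => ?_
        by_contra hcon
        push_neg at hcon
        exact hx ⟨hx0, ε, hε, hcon⟩
    have h0 : μ ({(0 : X)} : Set X) = 0 := by
      have hbot : ((⊥ : Submodule ℝ X) : Set X) = {(0 : X)} := by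
        ext y; simp
      rw [← hbot]
      exact Measure.addHaar_submodule μ ⊥ bot_ne_top
    have hBk : ∀ k : ℕ, μ (B ∩ Metric.closedBall 0 (k : ℝ)) = 0 := by
      intro k
      set C := μ (Metric.closedBall (0 : X) ((k : ℝ) + 4)) with hC
      have hCfin : C ≠ ⊤ := measure_closedBall_lt_top.ne
      have hbound : ∀ m : ℕ, 2 * ((k : ℝ) + 1) / ((m : ℝ) + 1) ≤ 1 →
          μ (B ∩ Metric.closedBall 0 (k : ℝ)) ≤
            ENNReal.ofReal (2 * ((k : ℝ) + 1) / ((m : ℝ) + 1)) * (c * C) := by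
        intro m hm
        set t : ℕ → ℝ := fun j => (((k : ℝ) + 1) / ((m : ℝ) + 1)) * (((j : ℝ) + 1) ^ 2)⁻¹
          with hts
        have htpos : ∀ j, 0 < t j := by intro j; rw [hts]; positivity
        set S : ℕ → Set X :=
          fun j => {x : X | ‖x‖ ≤ (k : ℝ) ∧ f j x ∈ Set.Ico (-(t j)) (-(t j) + 2 * t j)}
          with hS
        have hsub2 : B ∩ Metric.closedBall 0 (k : ℝ) ⊆ ⋃ j : ℕ, S j := by
          rintro x ⟨hxB, hxb⟩
          rw [Metric.mem_closedBall, dist_zero_right] at hxb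
          obtain ⟨j, hj⟩ := hxB (1 / ((m : ℝ) + 1)) (by positivity)
          have hlt : ‖f j x‖ < t j := by
            have h1 : (1 / ((m : ℝ) + 1)) * (((j : ℝ) + 1) ^ 2)⁻¹ * ‖x‖ ≤
                (1 / ((m : ℝ) + 1)) * (((j : ℝ) + 1) ^ 2)⁻¹ * (k : ℝ) := by
              have : (0:ℝ) < (1 / ((m : ℝ) + 1)) * (((j : ℝ) + 1) ^ 2)⁻¹ := by positivity
              nlinarith
            have h2 : (1 / ((m : ℝ) + 1)) * (((j : ℝ) + 1) ^ 2)⁻¹ * (k : ℝ) < t j := by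
              have hp : (0:ℝ) < (((j : ℝ) + 1) ^ 2)⁻¹ := by positivity
              have hq : (0:ℝ) < ((m : ℝ) + 1)⁻¹ := by positivity
              simp only [hts, div_eq_mul_inv, one_div]
              nlinarith [mul_pos hq hp]
            linarith
          refine Set.mem_iUnion.mpr ⟨j, hxb, ?_, ?_⟩
          · have := (abs_lt.mp (by rwa [Real.norm_eq_abs] at hlt)).1
            linarith
          · have := (abs_lt.mp (by rwa [Real.norm_eq_abs] at hlt)).2
            linarith
        have h2t : ∀ j : ℕ, 2 * t j ≤ 1 := by
          intro j
          have hj1 : (((j : ℝ) + 1) ^ 2)⁻¹ ≤ 1 := by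
            rw [inv_le_one_iff₀]
            right
            nlinarith [Nat.cast_nonneg (α := ℝ) j, sq_nonneg ((j : ℝ) + 1)]
          have hq : (0:ℝ) < ((k : ℝ) + 1) / ((m : ℝ) + 1) := by positivity
          calc 2 * t j = (2 * (((k : ℝ) + 1) / ((m : ℝ) + 1))) * (((j : ℝ) + 1) ^ 2)⁻¹ := by
                rw [hts]; ring
          _ ≤ (2 * (((k : ℝ) + 1) / ((m : ℝ) + 1))) * 1 := by
                apply mul_le_mul_of_nonneg_left hj1 (by positivity)
          _ = 2 * ((k : ℝ) + 1) / ((m : ℝ) + 1) := by ring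
          _ ≤ 1 := hm
        have hof : ∀ j : ℕ, ENNReal.ofReal (2 * t j) =
            ENNReal.ofReal (2 * ((k : ℝ) + 1) / ((m : ℝ) + 1)) *
              ENNReal.ofReal ((((j : ℝ) + 1) ^ 2)⁻¹) := by
          intro j
          rw [← ENNReal.ofReal_mul (by positivity)]
          congr 1
          rw [hts]; ring
        calc μ (B ∩ Metric.closedBall 0 (k : ℝ)) ≤ μ (⋃ j : ℕ, S j) := measure_mono hsub2
        _ ≤ ∑' j : ℕ, μ (S j) := measure_iUnion_le _
        _ ≤ ∑' j : ℕ, ENNReal.ofReal (2 * t j) * C := by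
              apply ENNReal.tsum_le_tsum
              intro j
              have := strip_bound μ (f j) (u j) (huu j) (hun j) (k : ℝ) (-(t j)) (2 * t j)
                (by positivity) (h2t j)
              exact this
        _ = (∑' j : ℕ, ENNReal.ofReal (2 * t j)) * C := ENNReal.tsum_mul_right
        _ = (ENNReal.ofReal (2 * ((k : ℝ) + 1) / ((m : ℝ) + 1)) * c) * C := by
              congr 1
              rw [hc, ← ENNReal.tsum_mul_left]
              exact tsum_congr hof
        _ = ENNReal.ofReal (2 * ((k : ℝ) + 1) / ((m : ℝ) + 1)) * (c * C) := by
              rw [mul_assoc]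
      have htend : Tendsto (fun m : ℕ =>
          ENNReal.ofReal (2 * ((k : ℝ) + 1) / ((m : ℝ) + 1)) * (c * C)) atTop (nhds 0) := by
        have h1 : Tendsto (fun m : ℕ => 2 * ((k : ℝ) + 1) / ((m : ℝ) + 1)) atTop (nhds 0) :=
          Tendsto.div_atTop tendsto_const_nhds
            (tendsto_atTop_add_const_right _ _ tendsto_natCast_atTop_atTop)
        have h2 : Tendsto (fun m : ℕ =>
            ENNReal.ofReal (2 * ((k : ℝ) + 1) / ((m : ℝ) + 1))) atTop (nhds 0) := by
          rw [← ENNReal.ofReal_zero]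
          exact (ENNReal.continuous_ofReal.tendsto 0).comp h1
        simpa using ENNReal.Tendsto.mul_const h2 (Or.inr (ENNReal.mul_ne_top hcfin hCfin))
      refine le_antisymm ?_ zero_le
      refine ge_of_tendsto htend ?_
      filter_upwards [eventually_ge_atTop ⌈2 * ((k : ℝ) + 1)⌉₊] with m hm
      apply hbound
      have h1 : 2 * ((k : ℝ) + 1) ≤ (m : ℝ) := by
        have := Nat.ceil_le.mp hm
        exact_mod_cast this
      rw [div_le_one (by positivity)]
      linarith
    have hBnull : μ B = 0 := by
      have hcov : B ⊆ ⋃ k : ℕ, B ∩ Metric.closedBall 0 (k : ℝ) := by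
        intro x hx
        obtain ⟨k, hk⟩ := exists_nat_ge ‖x‖
        exact Set.mem_iUnion.mpr ⟨k, hx, by
          simpa [Metric.mem_closedBall, dist_zero_right] using hk⟩
      exact measure_mono_null hcov (measure_iUnion_null hBk)
    refine le_antisymm ?_ zero_le
    calc μ _ ≤ μ ({(0 : X)} ∪ B) := measure_mono hsub
    _ ≤ μ ({(0 : X)} : Set X) + μ B := measure_union_le _ _
    _ = 0 := by rw [h0, hBnull, add_zero]
  -- pointwise conclusion
  filter_upwards [key] with x hx
  obtain ⟨hx0, ε, hε, hεj⟩ := hx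
  have hxn : 0 < ‖x‖ := norm_pos_iff.mpr hx0
  have hfx : ∀ j, f j x ≠ 0 := by
    intro j h
    have h1 := hεj j
    rw [h, norm_zero] at h1
    have : (0:ℝ) < ε * (((j : ℝ) + 1) ^ 2)⁻¹ * ‖x‖ := by positivity
    linarith
  have hxV : ∀ j, x ∉ V j := by
    intro j hxj
    apply hfx j
    rw [← hf2 j] at hxj
    exact LinearMap.mem_ker.mp hxj
  constructor
  · intro j
    have hdisj : Disjoint (V j) (Submodule.span ℝ {x}) := by
      rw [Submodule.disjoint_span_singleton' hx0]
      exact hxV j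
    refine ⟨hdisj, ?_⟩
    rw [codisjoint_iff]
    apply Submodule.eq_top_of_disjoint _ _ ?_ hdisj
    rw [finrank_span_singleton hx0]
    have h1 := Submodule.finrank_quotient_add_finrank (V j)
    rw [hV j, hdim] at h1
    rw [hdim]
    omega
  · refine ⟨ε / 2, by positivity, fun j => ?_⟩
    have hne : Nonempty (V j) := ⟨0, (V j).zero_mem⟩
    rw [Metric.infDist_eq_iInf]
    apply le_ciInf
    intro y
    have hfy : f j (y : X) = 0 := by
      have hyk : (y : X) ∈ LinearMap.ker (f j : X →ₗ[ℝ] ℝ) := by rw [hf2 j]; exact y.2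
      exact LinearMap.mem_ker.mp hyk
    have h1 : ε * (((j : ℝ) + 1) ^ 2)⁻¹ ≤ ‖f j x‖ / ‖x‖ := by
      rw [le_div_iff₀ hxn]
      exact hεj j
    have h2 : ‖f j (‖x‖⁻¹ • x)‖ = ‖f j x‖ / ‖x‖ := by
      rw [(f j).map_smul, norm_smul, Real.norm_eq_abs, abs_of_pos (inv_pos.mpr hxn)]
      rw [div_eq_inv_mul]
    have h3 : ‖f j (‖x‖⁻¹ • x)‖ ≤ 2 * dist (‖x‖⁻¹ • x) (y : X) := by
      calc ‖f j (‖x‖⁻¹ • x)‖ = ‖f j (‖x‖⁻¹ • x) - f j (y : X)‖ := by rw [hfy, sub_zero]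
      _ = ‖f j ((‖x‖⁻¹ • x) - (y : X))‖ := by rw [map_sub]
      _ ≤ ‖f j‖ * ‖(‖x‖⁻¹ • x) - (y : X)‖ := (f j).le_opNorm _
      _ ≤ 2 * ‖(‖x‖⁻¹ • x) - (y : X)‖ :=
            mul_le_mul_of_nonneg_right (hf1 j) (norm_nonneg _)
      _ = 2 * dist (‖x‖⁻¹ • x) (y : X) := by rw [dist_eq_norm]
    have h4 := h1.trans h2.symm.le
    nlinarith [dist_nonneg (x := ‖x‖⁻¹ • x) (y := (y : X))]
end

section
/- Let X be a Banach space and (V_j)_{j∈ℕ} closed complemented subspaces of codimension k. The set of all tuples (c₁,…,c_k) ∈ Xᵏ such that span(c₁,…,c_k) is a well-separating common complement of (V_j) is a Borel subset of Xᵏ. -/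
open Filter

open Metric Submodule Set Pointwise

section Aux

variable {Y : Type*} [NormedAddCommGroup Y] [NormedSpace ℝ Y]

/-- bound on linear combinations -/
lemma sum_smul_norm_le {n : ℕ} (h : Fin n → ℝ) (d : Fin n → Y) :
    ‖∑ i, h i • d i‖ ≤ ‖h‖ * ∑ i, ‖d i‖ := by
  calc ‖∑ i, h i • d i‖ ≤ ∑ i, ‖h i • d i‖ := norm_sum_le _ _
  _ ≤ ∑ i, ‖h‖ * ‖d i‖ := by
      refine Finset.sum_le_sum fun i _ => ?_
      rw [norm_smul]
      exact mul_le_mul_of_nonneg_right (norm_le_pi_norm h i) (norm_nonneg _)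
  _ = ‖h‖ * ∑ i, ‖d i‖ := by rw [Finset.mul_sum]

lemma rat_tuple_cast_ne_zero {n : ℕ} {a : Fin n → ℚ} (ha : a ≠ 0) :
    (fun i => (a i : ℝ)) ≠ 0 := by
  intro h
  apply ha
  funext i
  have := congrFun h i
  simpa using this

lemma exists_rat_tuple_near {n : ℕ} (g : Fin n → ℝ) {δ : ℝ} (hδ : 0 < δ) :
    ∃ a : Fin n → ℚ, ‖(fun i => (a i : ℝ)) - g‖ ≤ δ := by
  have : ∀ i, ∃ q : ℚ, |(q : ℝ) - g i| ≤ δ := by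
    intro i
    obtain ⟨q, hq⟩ := exists_rat_near (g i) hδ
    exact ⟨q, by rw [abs_sub_comm]; exact hq.le⟩
  choose a ha using this
  refine ⟨a, ?_⟩
  rw [pi_norm_le_iff_of_nonneg hδ.le]
  intro i
  simpa [Real.norm_eq_abs] using ha i

lemma li_iff_iInf_pos {n : ℕ} (d : Fin (n+1) → Y) :
    LinearIndependent ℝ d ↔
      0 < ⨅ a : {q : Fin (n+1) → ℚ // q ≠ 0},
        ‖(fun i => ((a.1 i : ℝ)))‖⁻¹ * ‖∑ i, (a.1 i : ℝ) • d i‖ := by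
  have hne : Nonempty {q : Fin (n+1) → ℚ // q ≠ 0} := by
    refine ⟨⟨fun _ => 1, ?_⟩⟩
    intro h
    have := congrFun h 0
    simp at this
  have hbdd : BddBelow (Set.range fun a : {q : Fin (n+1) → ℚ // q ≠ 0} =>
      ‖(fun i => ((a.1 i : ℝ)))‖⁻¹ * ‖∑ i, (a.1 i : ℝ) • d i‖) := by
    refine ⟨0, ?_⟩
    rintro x ⟨a, rfl⟩
    positivity
  constructor
  · intro hli
    -- build linear map
    let f : (Fin (n+1) → ℝ) →ₗ[ℝ] Y :=
      { toFun := fun g => ∑ i, g i • d i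
        map_add' := by
          intro x y
          simp [add_smul, Finset.sum_add_distrib]
        map_smul' := by
          intro r x
          simp [smul_smul, Finset.smul_sum] }
    have hker : LinearMap.ker f = ⊥ := by
      rw [LinearMap.ker_eq_bot']
      intro g hg
      funext i
      exact Fintype.linearIndependent_iff.mp hli g hg i
    obtain ⟨K, hK0, hKa⟩ := f.exists_antilipschitzWith hker
    have hKpos : (0:ℝ) < (K:ℝ) := hK0
    refine lt_of_lt_of_le (by positivity : (0:ℝ) < (K:ℝ)⁻¹) (le_ciInf fun a => ?_)
    set ar : Fin (n+1) → ℝ := fun i => (a.1 i : ℝ)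
    have har : ar ≠ 0 := rat_tuple_cast_ne_zero a.2
    have harpos : 0 < ‖ar‖ := norm_pos_iff.mpr har
    have hle : ‖ar‖ ≤ (K:ℝ) * ‖f ar‖ := by
      have := hKa.le_mul_dist ar 0
      simpa [map_zero] using this
    have hfa : ‖f ar‖ = ‖∑ i, (a.1 i : ℝ) • d i‖ := rfl
    rw [← hfa]
    have h2 : (K:ℝ)⁻¹ * ‖ar‖ ≤ ‖f ar‖ := by
      rw [inv_mul_le_iff₀ hKpos]; exact hle
    calc (K:ℝ)⁻¹ = ‖ar‖⁻¹ * ((K:ℝ)⁻¹ * ‖ar‖) := by field_simp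
    _ ≤ ‖ar‖⁻¹ * ‖f ar‖ := by
        exact mul_le_mul_of_nonneg_left h2 (by positivity)
  · intro hpos
    set ε := ⨅ a : {q : Fin (n+1) → ℚ // q ≠ 0},
        ‖(fun i => ((a.1 i : ℝ)))‖⁻¹ * ‖∑ i, (a.1 i : ℝ) • d i‖ with hε
    rw [Fintype.linearIndependent_iff]
    intro g hg
    by_contra hgne
    push_neg at hgne
    obtain ⟨i0, hi0⟩ := hgne
    have hgne' : g ≠ 0 := fun h => hi0 (by rw [h]; rfl)
    have hgpos : 0 < ‖g‖ := norm_pos_iff.mpr hgne'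
    set C := ∑ i, ‖d i‖ with hC
    have hCnn : 0 ≤ C := Finset.sum_nonneg fun i _ => norm_nonneg _
    set δ := min (‖g‖/2) (ε * ‖g‖ / (2*(C+1))) with hδ
    have hδpos : 0 < δ := by
      apply lt_min (by positivity)
      have : 0 < C + 1 := by linarith
      positivity
    obtain ⟨a, ha⟩ := exists_rat_tuple_near g hδpos
    set ar : Fin (n+1) → ℝ := fun i => (a i : ℝ) with har
    have harnorm : ‖g‖ / 2 ≤ ‖ar‖ := by
      have h1 : ‖g‖ - ‖ar‖ ≤ ‖ar - g‖ := by
        have h := norm_sub_norm_le g ar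
        rw [norm_sub_rev] at h
        linarith
      have h2 : ‖ar - g‖ ≤ ‖g‖/2 := ha.trans (min_le_left _ _)
      linarith
    have harne : ar ≠ 0 := by
      intro h
      rw [h, norm_zero] at harnorm
      linarith
    have hane : a ≠ 0 := fun h => harne (by rw [har, h]; funext i; simp)
    -- the sum bound
    have hsum : ‖∑ i, ar i • d i‖ ≤ δ * C := by
      have heq : ∑ i, ar i • d i = ∑ i, (ar - g) i • d i := by
        rw [← sub_eq_zero]
        rw [← Finset.sum_sub_distrib]
        simp only [Pi.sub_apply, sub_smul]
        simp [hg]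
      rw [heq]
      calc ‖∑ i, (ar - g) i • d i‖ ≤ ‖ar - g‖ * C := sum_smul_norm_le _ _
      _ ≤ δ * C := mul_le_mul_of_nonneg_right ha hCnn
    have hterm : ε ≤ ‖ar‖⁻¹ * ‖∑ i, ar i • d i‖ := ciInf_le hbdd ⟨a, hane⟩
    have harinv : ‖ar‖⁻¹ ≤ 2 / ‖g‖ := by
      rw [inv_le_comm₀ (by linarith : (0:ℝ) < ‖ar‖) (by positivity), inv_div]
      exact harnorm
    have hbound : ‖ar‖⁻¹ * ‖∑ i, ar i • d i‖ ≤ (2/‖g‖) * (δ * C) := by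
      apply mul_le_mul harinv hsum (norm_nonneg _) (by positivity)
    have hδle : δ ≤ ε * ‖g‖ / (2*(C+1)) := min_le_right _ _
    have : ε ≤ (2/‖g‖) * ((ε * ‖g‖ / (2*(C+1))) * C) := by
      refine hterm.trans (hbound.trans ?_)
      apply mul_le_mul_of_nonneg_left _ (by positivity)
      exact mul_le_mul_of_nonneg_right hδle hCnn
    have hfin : (2/‖g‖) * ((ε * ‖g‖ / (2*(C+1))) * C) = ε * (C / (C+1)) := by
      field_simp
    rw [hfin] at this
    have hfrac : C / (C+1) < 1 := by
      rw [div_lt_one (by linarith)]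
      linarith
    nlinarith [hpos]

variable {X : Type*} [NormedAddCommGroup X] [NormedSpace ℝ X]

lemma isCompl_iff_quot_li {n : ℕ} (V : Submodule ℝ X)
    (hcod : Module.finrank ℝ (X ⧸ V) = n + 1) (c : Fin (n+1) → X) :
    IsCompl V (span ℝ (range c)) ↔ LinearIndependent ℝ (fun i => V.mkQ (c i)) := by
  haveI : FiniteDimensional ℝ (X ⧸ V) :=
    Module.finite_of_finrank_pos (by rw [hcod]; exact Nat.succ_pos n)
  have hmap : Submodule.map V.mkQ (span ℝ (range c)) =
      span ℝ (range (fun i => V.mkQ (c i))) := by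
    rw [Submodule.map_span, ← Set.range_comp]
    rfl
  constructor
  · intro hc
    have htop : V ⊔ span ℝ (range c) = ⊤ := hc.codisjoint.eq_top
    have hmapV : Submodule.map V.mkQ V = ⊥ := by
      rw [eq_bot_iff]
      rintro x ⟨y, hy, rfl⟩
      simp only [Submodule.mkQ_apply, Submodule.mem_bot, Submodule.Quotient.mk_eq_zero]
      exact hy
    have htop2 : span ℝ (range (fun i => V.mkQ (c i))) = ⊤ := by
      rw [← hmap, ← bot_sup_eq (Submodule.map V.mkQ (span ℝ (range c))), ← hmapV,
        ← Submodule.map_sup, htop, Submodule.map_top, Submodule.range_mkQ]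
    apply linearIndependent_of_top_le_span_of_card_eq_finrank htop2.ge
    simp [hcod]
  · intro hli
    constructor
    · rw [disjoint_iff, eq_bot_iff]
      rintro x ⟨hxV, hxs⟩
      obtain ⟨b, rfl⟩ := (mem_span_range_iff_exists_fun ℝ).mp hxs
      have h0 : ∑ i, b i • V.mkQ (c i) = 0 := by
        have : ∑ i, b i • V.mkQ (c i) = V.mkQ (∑ i, b i • c i) := by
          rw [map_sum]
          simp only [map_smul]
        rw [this, Submodule.mkQ_apply, Submodule.Quotient.mk_eq_zero]
        exact hxV
      have hb := Fintype.linearIndependent_iff.mp hli b h0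
      simp only [Submodule.mem_bot]
      rw [show b = 0 from funext hb]
      simp
    · rw [codisjoint_iff, eq_top_iff]
      intro x _
      have hsp : span ℝ (range (fun i => V.mkQ (c i))) = ⊤ := by
        apply hli.span_eq_top_of_card_eq_finrank
        simp [hcod]
      have hx : V.mkQ x ∈ Submodule.map V.mkQ (span ℝ (range c)) := by
        rw [hmap, hsp]; trivial
      obtain ⟨y, hy, hyx⟩ := hx
      have hxy : x - y ∈ V := by
        rw [← Submodule.Quotient.mk_eq_zero]
        have : V.mkQ (x - y) = 0 := by rw [map_sub, hyx, sub_self]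
        exact this
      have : x = (x - y) + y := by abel
      rw [this]
      exact Submodule.add_mem_sup hxy hy

lemma norm_mkQ_eq_infDist (V : Submodule ℝ X) (x : X) :
    ‖V.mkQ x‖ = infDist x (V : Set X) := by
  have := QuotientAddGroup.norm_mk (S := V.toAddSubgroup) x
  exact this

lemma isCompl_iff_iInf_pos {n : ℕ} (V : Submodule ℝ X) (hV : IsClosed (V : Set X))
    (hcod : Module.finrank ℝ (X ⧸ V) = n + 1) (c : Fin (n+1) → X) :
    IsCompl V (span ℝ (range c)) ↔
      0 < ⨅ a : {q : Fin (n+1) → ℚ // q ≠ 0},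
        ‖(fun i => ((a.1 i : ℝ)))‖⁻¹ * infDist (∑ i, (a.1 i : ℝ) • c i) (V : Set X) := by
  haveI := hV
  rw [isCompl_iff_quot_li V hcod c, li_iff_iInf_pos]
  have heq : (⨅ a : {q : Fin (n+1) → ℚ // q ≠ 0},
        ‖(fun i => ((a.1 i : ℝ)))‖⁻¹ * ‖∑ i, (a.1 i : ℝ) • V.mkQ (c i)‖) =
      ⨅ a : {q : Fin (n+1) → ℚ // q ≠ 0},
        ‖(fun i => ((a.1 i : ℝ)))‖⁻¹ * infDist (∑ i, (a.1 i : ℝ) • c i) (V : Set X) := by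
    refine iInf_congr fun a => ?_
    congr 1
    rw [← norm_mkQ_eq_infDist, map_sum]
    simp only [map_smul]
  rw [heq]

lemma smul_submodule_set (V : Submodule ℝ X) {r : ℝ} (hr : r ≠ 0) :
    r • (V : Set X) = (V : Set X) := by
  ext y
  constructor
  · rintro ⟨z, hz, rfl⟩
    exact V.smul_mem r hz
  · intro hy
    exact ⟨r⁻¹ • y, V.smul_mem r⁻¹ hy, by simp [smul_smul, mul_inv_cancel₀ hr]⟩

lemma infDist_smul_submodule (V : Submodule ℝ X) {r : ℝ} (hr : r ≠ 0) (x : X) :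
    infDist (r • x) (V : Set X) = |r| * infDist x (V : Set X) := by
  conv_lhs => rw [← smul_submodule_set V hr]
  rw [infDist_smul₀ hr, Real.norm_eq_abs]

lemma sInf_sphere_eq_iInf {n : ℕ} (V : Submodule ℝ X) (c : Fin (n+1) → X)
    (hli : LinearIndependent ℝ c) :
    sInf ((fun x => infDist x (V : Set X)) ''
        {x : X | x ∈ span ℝ (range c) ∧ ‖x‖ = 1}) =
      ⨅ a : {q : Fin (n+1) → ℚ // q ≠ 0},
        ‖∑ i, (a.1 i : ℝ) • c i‖⁻¹ * infDist (∑ i, (a.1 i : ℝ) • c i) (V : Set X) := by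
  haveI hne : Nonempty {q : Fin (n+1) → ℚ // q ≠ 0} := by
    refine ⟨⟨fun _ => 1, ?_⟩⟩
    intro h
    have := congrFun h 0
    simp at this
  have hbddI : BddBelow (Set.range fun a : {q : Fin (n+1) → ℚ // q ≠ 0} =>
      ‖∑ i, (a.1 i : ℝ) • c i‖⁻¹ * infDist (∑ i, (a.1 i : ℝ) • c i) (V : Set X)) := by
    refine ⟨0, ?_⟩
    rintro x ⟨a, rfl⟩
    have := infDist_nonneg (x := ∑ i, (a.1 i : ℝ) • c i) (s := (V : Set X))
    positivity
  have hbddS : BddBelow ((fun x => infDist x (V : Set X)) ''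
      {x : X | x ∈ span ℝ (range c) ∧ ‖x‖ = 1}) := by
    refine ⟨0, ?_⟩
    rintro y ⟨x, _, rfl⟩
    exact infDist_nonneg
  have hsum_mem : ∀ b : Fin (n+1) → ℝ, (∑ i, b i • c i) ∈ span ℝ (range c) := by
    intro b
    exact Submodule.sum_mem _ fun i _ =>
      Submodule.smul_mem _ _ (subset_span (mem_range_self i))
  have hsum_ne : ∀ b : Fin (n+1) → ℝ, b ≠ 0 → (∑ i, b i • c i) ≠ 0 := by
    intro b hb h0
    apply hb
    funext i
    exact Fintype.linearIndependent_iff.mp hli b h0 i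
  apply le_antisymm
  · refine le_ciInf fun a => ?_
    set v := ∑ i, (a.1 i : ℝ) • c i with hv
    have hvne : v ≠ 0 := hsum_ne _ (fun h => a.2 (by
      funext i
      have := congrFun h i
      simpa using this))
    have hvpos : 0 < ‖v‖ := norm_pos_iff.mpr hvne
    refine csInf_le hbddS ⟨‖v‖⁻¹ • v, ⟨Submodule.smul_mem _ _ (hsum_mem _), ?_⟩, ?_⟩
    · rw [norm_smul, norm_inv, norm_norm, inv_mul_cancel₀ hvpos.ne']
    · show infDist (‖v‖⁻¹ • v) (V : Set X) = _
      rw [infDist_smul_submodule V (by positivity : ‖v‖⁻¹ ≠ 0)]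
      rw [abs_of_pos (by positivity)]
  · have hC0 : 0 < ‖c 0‖ := norm_pos_iff.mpr (hli.ne_zero 0)
    set C := ∑ i, ‖c i‖ with hC
    have hCpos : 0 < C := by
      refine lt_of_lt_of_le hC0 (Finset.single_le_sum (fun i _ => norm_nonneg _) (Finset.mem_univ 0))
    refine le_csInf ?_ ?_
    · refine ⟨infDist (‖c 0‖⁻¹ • c 0) (V : Set X), ‖c 0‖⁻¹ • c 0,
        ⟨Submodule.smul_mem _ _ (subset_span (mem_range_self 0)), ?_⟩, rfl⟩
      rw [norm_smul, norm_inv, norm_norm, inv_mul_cancel₀ hC0.ne']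
    · rintro y ⟨x, ⟨hxs, hxn⟩, rfl⟩
      set t := infDist x (V : Set X) with ht
      have htnn : 0 ≤ t := infDist_nonneg
      have ht1 : t ≤ 1 := by
        have := infDist_le_dist_of_mem (x := x) (show (0:X) ∈ (V : Set X) from V.zero_mem)
        rw [dist_zero_right, hxn] at this
        exact this
      refine le_of_forall_pos_le_add fun ε hε => ?_
      obtain ⟨b, hb⟩ := (mem_span_range_iff_exists_fun ℝ).mp hxs
      set δ := min (1/(2*C)) (ε/(C*(2+ε))) with hδ
      have hδpos : 0 < δ := by
        apply lt_min (by positivity) (by positivity)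
      obtain ⟨a, ha⟩ := exists_rat_tuple_near b hδpos
      set ar : Fin (n+1) → ℝ := fun i => (a i : ℝ) with har
      set v := ∑ i, ar i • c i with hv
      have hvx : ‖v - x‖ ≤ δ * C := by
        rw [← hb]
        have heq : v - ∑ i, b i • c i = ∑ i, (ar - b) i • c i := by
          rw [← Finset.sum_sub_distrib]
          simp only [Pi.sub_apply, sub_smul]
        rw [heq]
        calc ‖∑ i, (ar - b) i • c i‖ ≤ ‖ar - b‖ * C := sum_smul_norm_le _ _
        _ ≤ δ * C := mul_le_mul_of_nonneg_right ha hCpos.le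
      have hδC : δ * C ≤ 1/2 := by
        calc δ * C ≤ (1/(2*C)) * C := mul_le_mul_of_nonneg_right (min_le_left _ _) hCpos.le
        _ = 1/2 := by field_simp
      have hδCε : δ * C ≤ ε/(2+ε) := by
        calc δ * C ≤ (ε/(C*(2+ε))) * C := mul_le_mul_of_nonneg_right (min_le_right _ _) hCpos.le
        _ = ε/(2+ε) := by field_simp
      have hvnorm : 1 - δ * C ≤ ‖v‖ := by
        have h1 : ‖x‖ - ‖v‖ ≤ ‖v - x‖ := by
          have h := norm_sub_norm_le x v
          rw [norm_sub_rev] at h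
          exact h
        rw [hxn] at h1
        linarith
      have hvpos : 0 < ‖v‖ := by linarith
      have hane : a ≠ 0 := by
        intro h
        have : v = 0 := by
          rw [hv]
          apply Finset.sum_eq_zero
          intro i _
          rw [har]
          simp [h]
        rw [this, norm_zero] at hvpos
        exact lt_irrefl 0 hvpos
      have hterm := ciInf_le hbddI ⟨a, hane⟩
      refine hterm.trans ?_
      have hdistv : infDist v (V : Set X) ≤ t + δ * C := by
        calc infDist v (V : Set X) ≤ t + dist v x := infDist_le_infDist_add_dist
        _ ≤ t + δ * C := by rw [dist_eq_norm]; linarith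
      have hdnn : 0 ≤ infDist v (V : Set X) := infDist_nonneg
      calc ‖v‖⁻¹ * infDist v (V : Set X) ≤ (1 - δ*C)⁻¹ * (t + δ*C) := by
            apply mul_le_mul _ hdistv hdnn (inv_nonneg.mpr (by linarith))
            exact inv_anti₀ (by linarith) hvnorm
      _ ≤ t + ε := by
          rw [inv_mul_le_iff₀ (by linarith : (0:ℝ) < 1 - δ*C)]
          have h1 : δ*C*(2+ε) ≤ ε := by
            rw [← le_div_iff₀ (by linarith : (0:ℝ) < 2+ε)]
            exact hδCε
          nlinarith [mul_nonneg (mul_nonneg hδpos.le hCpos.le) htnn]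

end Aux


/-- For closed complemented codimension-`k` subspaces `(V_j)` of a
Banach space `X`, the set of tuples `(c₁,…,c_k) ∈ Xᵏ` spanning a well-separating common
complement of `(V_j)` (the `cᵢ` are linearly independent, the span is a complement of
every `V_j`, and the degrees of transversality `g_j` are positive with
`(1/j)·log g_j → 0`) is a Borel subset of `Xᵏ`. -/
theorem stmt12 {X : Type*} [NormedAddCommGroup X] [NormedSpace ℝ X] [CompleteSpace X]
    (k : ℕ) (V : ℕ → Submodule ℝ X)
    (hVclosed : ∀ j, IsClosed (V j : Set X))
    (hVcompl : ∀ j, ∃ W : Submodule ℝ X, IsCompl (V j) W)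
    (hVcodim : ∀ j, Module.finrank ℝ (X ⧸ V j) = k) :
    @MeasurableSet (Fin k → X) (borel (Fin k → X))
      {c : Fin k → X |
        LinearIndependent ℝ c ∧
        (∀ j, IsCompl (V j) (Submodule.span ℝ (Set.range c))) ∧
        (∀ j, 0 < sInf ((fun x => Metric.infDist x (V j : Set X)) ''
          {x : X | x ∈ Submodule.span ℝ (Set.range c) ∧ ‖x‖ = 1})) ∧
        Tendsto (fun j : ℕ => (1 / ((j : ℝ) + 1)) *
          Real.log (sInf ((fun x => Metric.infDist x (V j : Set X)) ''
            {x : X | x ∈ Submodule.span ℝ (Set.range c) ∧ ‖x‖ = 1})))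
          atTop (nhds 0)} := by
  cases k with
  | zero =>
    letI : MeasurableSpace (Fin 0 → X) := borel _
    have hempty : {c : Fin 0 → X |
        LinearIndependent ℝ c ∧
        (∀ j, IsCompl (V j) (Submodule.span ℝ (Set.range c))) ∧
        (∀ j, 0 < sInf ((fun x => Metric.infDist x (V j : Set X)) ''
          {x : X | x ∈ Submodule.span ℝ (Set.range c) ∧ ‖x‖ = 1})) ∧
        Tendsto (fun j : ℕ => (1 / ((j : ℝ) + 1)) *
          Real.log (sInf ((fun x => Metric.infDist x (V j : Set X)) ''
            {x : X | x ∈ Submodule.span ℝ (Set.range c) ∧ ‖x‖ = 1})))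
          atTop (nhds 0)} = ∅ := by
      ext c
      simp only [Set.mem_setOf_eq, Set.mem_empty_iff_false, iff_false]
      rintro ⟨-, -, h3, -⟩
      have hrange : Set.range c = ∅ := by
        rw [Set.range_eq_empty_iff]
        exact ⟨fun i => absurd i.2 (by simp)⟩
      have hsph : {x : X | x ∈ Submodule.span ℝ (Set.range c) ∧ ‖x‖ = 1} = ∅ := by
        ext x
        simp only [hrange, Submodule.span_empty, Submodule.mem_bot, Set.mem_setOf_eq,
          Set.mem_empty_iff_false, iff_false]
        rintro ⟨rfl, hx⟩
        rw [norm_zero] at hx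
        exact one_ne_zero hx.symm
      have := h3 0
      rw [hsph, Set.image_empty, Real.sInf_empty] at this
      exact lt_irrefl 0 this
    rw [hempty]
    exact MeasurableSet.empty
  | succ n =>
    letI : MeasurableSpace (Fin (n+1) → X) := borel _
    haveI : BorelSpace (Fin (n+1) → X) := ⟨rfl⟩
    set fA : (Fin (n+1) → X) → ℝ := fun c => ⨅ a : {q : Fin (n+1) → ℚ // q ≠ 0},
      ‖(fun i => ((a.1 i : ℝ)))‖⁻¹ * ‖∑ i, (a.1 i : ℝ) • c i‖ with hfA
    set fB : ℕ → (Fin (n+1) → X) → ℝ := fun j c => ⨅ a : {q : Fin (n+1) → ℚ // q ≠ 0},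
      ‖(fun i => ((a.1 i : ℝ)))‖⁻¹ * infDist (∑ i, (a.1 i : ℝ) • c i) (V j : Set X) with hfB
    set fF : ℕ → (Fin (n+1) → X) → ℝ := fun j c => ⨅ a : {q : Fin (n+1) → ℚ // q ≠ 0},
      ‖∑ i, (a.1 i : ℝ) • c i‖⁻¹ * infDist (∑ i, (a.1 i : ℝ) • c i) (V j : Set X) with hfF
    have hvcont : ∀ (r : Fin (n+1) → ℝ),
        Continuous fun c : Fin (n+1) → X => ∑ i, r i • c i := by
      intro r
      exact continuous_finset_sum _ fun i _ => (continuous_apply i).const_smul (r i)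
    have hA : Measurable fA :=
      Measurable.iInf fun a => ((hvcont _).norm.measurable).const_mul _
    have hB : ∀ j, Measurable (fB j) := fun j =>
      Measurable.iInf fun a =>
        (((continuous_infDist_pt _).comp (hvcont _)).measurable).const_mul _
    have hF : ∀ j, Measurable (fF j) := fun j =>
      Measurable.iInf fun a =>
        ((hvcont _).norm.measurable).inv.mul
          ((continuous_infDist_pt _).comp (hvcont _)).measurable
    have hset : {c : Fin (n+1) → X |
        LinearIndependent ℝ c ∧
        (∀ j, IsCompl (V j) (Submodule.span ℝ (Set.range c))) ∧
        (∀ j, 0 < sInf ((fun x => Metric.infDist x (V j : Set X)) ''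
          {x : X | x ∈ Submodule.span ℝ (Set.range c) ∧ ‖x‖ = 1})) ∧
        Tendsto (fun j : ℕ => (1 / ((j : ℝ) + 1)) *
          Real.log (sInf ((fun x => Metric.infDist x (V j : Set X)) ''
            {x : X | x ∈ Submodule.span ℝ (Set.range c) ∧ ‖x‖ = 1})))
          atTop (nhds 0)} =
        {c | 0 < fA c} ∩ ((⋂ j, {c | 0 < fB j c}) ∩ ((⋂ j, {c | 0 < fF j c}) ∩
          {c | Tendsto (fun j : ℕ => (1 / ((j : ℝ) + 1)) * Real.log (fF j c))
            atTop (nhds 0)})) := by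
      ext c
      simp only [Set.mem_setOf_eq, Set.mem_inter_iff, Set.mem_iInter]
      constructor
      · rintro ⟨h1, h2, h3, h4⟩
        have key : ∀ j, sInf ((fun x => Metric.infDist x (V j : Set X)) ''
            {x : X | x ∈ Submodule.span ℝ (Set.range c) ∧ ‖x‖ = 1}) = fF j c :=
          fun j => sInf_sphere_eq_iInf (V j) c h1
        refine ⟨(li_iff_iInf_pos c).mp h1, fun j =>
          (isCompl_iff_iInf_pos (V j) (hVclosed j) (hVcodim j) c).mp (h2 j),
          fun j => by rw [← key j]; exact h3 j, ?_⟩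
        have : (fun j : ℕ => (1 / ((j : ℝ) + 1)) * Real.log (fF j c)) =
            (fun j : ℕ => (1 / ((j : ℝ) + 1)) *
              Real.log (sInf ((fun x => Metric.infDist x (V j : Set X)) ''
                {x : X | x ∈ Submodule.span ℝ (Set.range c) ∧ ‖x‖ = 1}))) := by
          funext j
          rw [key j]
        rw [this]
        exact h4
      · rintro ⟨h1, h2, h3, h4⟩
        have hli := (li_iff_iInf_pos c).mpr h1
        have key : ∀ j, sInf ((fun x => Metric.infDist x (V j : Set X)) ''
            {x : X | x ∈ Submodule.span ℝ (Set.range c) ∧ ‖x‖ = 1}) = fF j c :=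
          fun j => sInf_sphere_eq_iInf (V j) c hli
        refine ⟨hli, fun j =>
          (isCompl_iff_iInf_pos (V j) (hVclosed j) (hVcodim j) c).mpr (h2 j),
          fun j => by rw [key j]; exact h3 j, ?_⟩
        have : (fun j : ℕ => (1 / ((j : ℝ) + 1)) *
            Real.log (sInf ((fun x => Metric.infDist x (V j : Set X)) ''
              {x : X | x ∈ Submodule.span ℝ (Set.range c) ∧ ‖x‖ = 1}))) =
            (fun j : ℕ => (1 / ((j : ℝ) + 1)) * Real.log (fF j c)) := by
          funext j
          rw [key j]
        rw [this]
        exact h4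
    rw [hset]
    refine (measurableSet_lt measurable_const hA).inter
      ((MeasurableSet.iInter fun j => measurableSet_lt measurable_const (hB j)).inter
        ((MeasurableSet.iInter fun j => measurableSet_lt measurable_const (hF j)).inter ?_))
    exact measurableSet_tendsto (nhds 0) fun j =>
      ((Real.measurable_log.comp (hF j)).const_mul _)
end
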